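/- arXiv:1609.05133 — 2 statements merged into one kernel-verified Lean document; each statement's English description precedes it below -/
import Mathlib

section
/- Let K be a field of arbitrary characteristic, R = K[[x_1,…,x_s]], and A ∈ m·M_{m,n} with o := ord(A). If there exists an integer k ≥ 0 such that m^{k+2}·M_{m,n} ⊆ m·T̃_A(R A) = m²·⟨∂A/∂x_ν : 1≤ν≤s⟩, then A is right (2k−o+2)-determined, i.e. for every B ∈ M_{m,n} with B − A ∈ m^{2k−o+3}·M_{m,n} there exists a K-algebra automorphism φ of R such that B = φ(A). -/
/- STATEMENT 1: finite right (𝓡) determinacy for matrices: if m^{k+2}·M_{m,n} ⊆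
m·T̃_A(𝓡A) = m²·⟨∂A/∂x_ν⟩, then A is right (2k−o+2)-determined, where o = ord(A). -/

open MvPowerSeries IsLocalRing

noncomputable section

/-- The formal partial derivative ∂f/∂x_ν of a formal power series. -/
def pderiv {K : Type*} [Field K] {s : ℕ} (ν : Fin s) (f : MvPowerSeries (Fin s) K) :
    MvPowerSeries (Fin s) K :=
  fun e => ((e ν + 1 : ℕ) : K) * MvPowerSeries.coeff (e + Finsupp.single ν 1) f

/-- The submodule I·M_{m,n} of matrices all of whose entries lie in the ideal I. -/
def matSub {K : Type*} [Field K] {s m n : ℕ} (I : Ideal (MvPowerSeries (Fin s) K)) :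
    Submodule (MvPowerSeries (Fin s) K) (Matrix (Fin m) (Fin n) (MvPowerSeries (Fin s) K)) where
  carrier := {A | ∀ i j, A i j ∈ I}
  add_mem' := fun ha hb i j => I.add_mem (ha i j) (hb i j)
  zero_mem' := fun _ _ => I.zero_mem
  smul_mem' := fun c _ hA i j => I.smul_mem c (hA i j)

/-- The tangent image T̃_A(𝓡 A) = m·⟨∂A/∂x_ν : 1 ≤ ν ≤ s⟩ for the right group. -/
def TR {K : Type*} [Field K] {s m n : ℕ} (A : Matrix (Fin m) (Fin n) (MvPowerSeries (Fin s) K)) :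
    Submodule (MvPowerSeries (Fin s) K) (Matrix (Fin m) (Fin n) (MvPowerSeries (Fin s) K)) :=
  (maximalIdeal (MvPowerSeries (Fin s) K)) •
    Submodule.span _ (Set.range fun ν : Fin s => A.map (pderiv ν))

namespace FD

variable {K : Type*} [Field K] {s : ℕ}

local notation "R" => MvPowerSeries (Fin s) K

/-- total degree of an exponent -/
def deg (d : Fin s →₀ ℕ) : ℕ := d.sum fun _ n => n

lemma deg_add (a b : Fin s →₀ ℕ) : deg (a + b) = deg a + deg b :=
  Finsupp.sum_add_index' (fun _ => rfl) (fun _ _ _ => rfl)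

lemma deg_eq_sum (d : Fin s →₀ ℕ) : deg d = ∑ ν : Fin s, d ν := by
  rw [deg, Finsupp.sum_fintype]; exact fun _ => rfl

lemma apply_le_deg (d : Fin s →₀ ℕ) (ν : Fin s) : d ν ≤ deg d := by
  rw [deg_eq_sum]
  exact Finset.single_le_sum (fun i _ => Nat.zero_le _) (Finset.mem_univ ν)

lemma deg_single (ν : Fin s) (n : ℕ) : deg (Finsupp.single ν n) = n := by
  simp [deg, Finsupp.sum_single_index]

lemma deg_zero : deg (0 : Fin s →₀ ℕ) = 0 := by simp [deg]

lemma eq_zero_of_deg_eq_zero {d : Fin s →₀ ℕ} (h : deg d = 0) : d = 0 := by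
  ext ν
  exact Nat.le_zero.mp (h ▸ apply_le_deg d ν)

/-- the ideal of power series of order at least `M` -/
def OI (M : ℕ) : Ideal R where
  carrier := {f | ∀ d, deg d < M → MvPowerSeries.coeff d f = 0}
  add_mem' := fun hf hg d hd => by rw [map_add, hf d hd, hg d hd, add_zero]
  zero_mem' := fun d _ => map_zero _
  smul_mem' := fun c f hf d hd => by
    rw [smul_eq_mul, coeff_mul]
    refine Finset.sum_eq_zero fun p hp => ?_
    have h1 : deg p.1 + deg p.2 = deg d := by
      rw [← deg_add, Finset.HasAntidiagonal.mem_antidiagonal.mp hp]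
    rw [hf p.2 (by omega), mul_zero]

lemma mem_OI {M : ℕ} {f : R} :
    f ∈ OI (K := K) (s := s) M ↔ ∀ d, deg d < M → MvPowerSeries.coeff d f = 0 := Iff.rfl

lemma OI_mono {M M' : ℕ} (h : M' ≤ M) : OI (K := K) (s := s) M ≤ OI M' :=
  fun _ hf d hd => hf d (lt_of_lt_of_le hd h)

lemma mul_mem_OI {a b : ℕ} {f g : R} (hf : f ∈ OI (K := K) (s := s) a) (hg : g ∈ OI b) :
    f * g ∈ OI (a + b) := by
  intro d hd
  rw [coeff_mul]
  refine Finset.sum_eq_zero fun p hp => ?_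
  have h1 : deg p.1 + deg p.2 = deg d := by
    rw [← deg_add, Finset.HasAntidiagonal.mem_antidiagonal.mp hp]
  by_cases h : deg p.1 < a
  · rw [hf p.1 h, zero_mul]
  · rw [hg p.2 (by omega), mul_zero]

lemma monomial_mem_OI {M : ℕ} {d : Fin s →₀ ℕ} (h : M ≤ deg d) (c : K) :
    MvPowerSeries.monomial d c ∈ OI (K := K) (s := s) M := by
  intro e he
  exact coeff_monomial_ne (by rintro rfl; omega) c

lemma X_mem_OI (ν : Fin s) : (MvPowerSeries.X ν : R) ∈ OI 1 := by
  rw [X_def]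
  exact monomial_mem_OI (by rw [deg_single]) 1

lemma eq_zero_of_forall_OI {f : R} (h : ∀ M, f ∈ OI (K := K) (s := s) M) : f = 0 := by
  ext d
  exact (h (deg d + 1)) d (Nat.lt_succ_self _)

lemma OI_zero_top : OI (K := K) (s := s) 0 = ⊤ :=
  eq_top_iff.mpr fun f _ d hd => absurd hd (Nat.not_lt_zero _)

end FD

namespace FD

variable {K : Type*} [Field K] {s : ℕ}

local notation "R" => MvPowerSeries (Fin s) K

lemma maximalIdeal_eq : maximalIdeal R = OI (K := K) (s := s) 1 := by
  ext f
  rw [IsLocalRing.mem_maximalIdeal, mem_nonunits_iff, MvPowerSeries.isUnit_iff_constantCoeff,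
    isUnit_iff_ne_zero, not_ne_iff, mem_OI]
  constructor
  · intro h d hd
    have : d = 0 := eq_zero_of_deg_eq_zero (by omega)
    rw [this, MvPowerSeries.coeff_zero_eq_constantCoeff, h]
  · intro h
    have := h 0 (by rw [deg_zero]; omega)
    rwa [MvPowerSeries.coeff_zero_eq_constantCoeff] at this

/-- split off the part of a power series divisible by `X ν` with `ν` minimal in support -/
def splitAux (ν : Fin s) (f : R) : R := fun d =>
  if (d + Finsupp.single ν 1).support.min = (ν : WithTop (Fin s)) then
    MvPowerSeries.coeff (d + Finsupp.single ν 1) f else 0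

lemma coeff_splitAux (ν : Fin s) (f : R) (d : Fin s →₀ ℕ) :
    MvPowerSeries.coeff d (splitAux ν f) =
    if (d + Finsupp.single ν 1).support.min = (ν : WithTop (Fin s)) then
      MvPowerSeries.coeff (d + Finsupp.single ν 1) f else 0 := rfl

lemma splitAux_mem {M : ℕ} {f : R} (hf : f ∈ OI (K := K) (s := s) (M + 1)) (ν : Fin s) :
    splitAux ν f ∈ OI M := by
  intro d hd
  rw [coeff_splitAux]
  split
  · exact hf _ (by rw [deg_add, deg_single]; omega)
  · rfl

lemma split_eq {f : R} (hf : f ∈ OI (K := K) (s := s) 1) :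
    f = ∑ ν : Fin s, MvPowerSeries.X ν * splitAux ν f := by
  ext d
  rw [map_sum]
  by_cases hd : d = 0
  · subst hd
    rw [hf 0 (by rw [deg_zero]; omega)]
    refine (Finset.sum_eq_zero fun ν _ => ?_).symm
    exact mul_mem_OI (X_mem_OI ν) ((OI_zero_top (K := K) (s := s)).symm ▸ Submodule.mem_top) 0
      (by rw [deg_zero]; omega)
  · have hsupp : d.support.Nonempty := Finsupp.support_nonempty_iff.mpr hd
    set ν₀ := d.support.min' hsupp with hν₀
    have hmin : d.support.min = (ν₀ : WithTop (Fin s)) := (Finset.coe_min' hsupp).symm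
    have hν₀mem : ν₀ ∈ d.support := Finset.min'_mem _ hsupp
    have hν₀pos : 1 ≤ d ν₀ := Nat.one_le_iff_ne_zero.mpr (Finsupp.mem_support_iff.mp hν₀mem)
    rw [Finset.sum_eq_single ν₀]
    · rw [X_def, coeff_monomial_mul, if_pos (Finsupp.single_le_iff.mpr hν₀pos), one_mul,
        coeff_splitAux, tsub_add_cancel_of_le (Finsupp.single_le_iff.mpr hν₀pos), if_pos hmin]
    · intro ν _ hν
      rw [X_def, coeff_monomial_mul]
      split
      · rename_i hle
        have hne : ¬ ((d - Finsupp.single ν 1 + Finsupp.single ν 1).support.min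
            = (ν : WithTop (Fin s))) := by
          rw [tsub_add_cancel_of_le hle, hmin]
          exact fun h => hν (by exact_mod_cast h.symm)
        rw [coeff_splitAux, if_neg hne, mul_zero]
      · rfl
    · exact fun h => absurd (Finset.mem_univ ν₀) h

end FD

namespace FD

variable {K : Type*} [Field K] {s : ℕ}

local notation "R" => MvPowerSeries (Fin s) K

lemma pow_le_OI (M : ℕ) : (OI (K := K) (s := s) 1) ^ M ≤ OI M := by
  induction M with
  | zero => rw [pow_zero, Ideal.one_eq_top, OI_zero_top]
  | succ M ih =>
    rw [pow_succ]
    refine Ideal.mul_le.mpr fun f hf g hg => ?_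
    exact mul_mem_OI (ih hf) hg

lemma OI_le_pow (M : ℕ) : OI (K := K) (s := s) M ≤ (OI (K := K) (s := s) 1) ^ M := by
  induction M with
  | zero => rw [pow_zero, Ideal.one_eq_top]; exact le_top
  | succ M ih =>
    intro f hf
    rw [split_eq (OI_mono (by omega) hf), pow_succ]
    refine Submodule.sum_mem _ fun ν _ => ?_
    have := Ideal.mul_mem_mul (ih (splitAux_mem hf ν)) (X_mem_OI ν)
    exact mul_comm (splitAux ν f) (MvPowerSeries.X ν) ▸ this

lemma maximalIdeal_pow_eq (M : ℕ) : (maximalIdeal R) ^ M = OI (K := K) (s := s) M := by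
  rw [maximalIdeal_eq]
  exact le_antisymm (pow_le_OI M) (OI_le_pow M)

lemma coeff_pderiv (ν : Fin s) (f : R) (d : Fin s →₀ ℕ) :
    MvPowerSeries.coeff d (pderiv ν f) =
      ((d ν + 1 : ℕ) : K) * MvPowerSeries.coeff (d + Finsupp.single ν 1) f := rfl

lemma pderiv_add (ν : Fin s) (f g : R) : pderiv ν (f + g) = pderiv ν f + pderiv ν g := by
  ext d
  simp only [map_add, coeff_pderiv, mul_add]

lemma pderiv_sub (ν : Fin s) (f g : R) : pderiv ν (f - g) = pderiv ν f - pderiv ν g := by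
  ext d
  simp only [map_sub, coeff_pderiv, mul_sub]

lemma pderiv_smul (ν : Fin s) (c : K) (f : R) : pderiv ν (c • f) = c • pderiv ν f := by
  ext d
  simp only [coeff_pderiv, LinearMap.map_smul, smul_eq_mul]
  ring

lemma pderiv_mem_OI {M : ℕ} {f : R} (hf : f ∈ OI (K := K) (s := s) (M + 1)) (ν : Fin s) :
    pderiv ν f ∈ OI M := by
  intro d hd
  rw [coeff_pderiv, hf _ (by rw [deg_add, deg_single]; omega), mul_zero]

lemma pderiv_monomial (ν : Fin s) (d : Fin s →₀ ℕ) (c : K) :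
    pderiv ν (MvPowerSeries.monomial d c) =
      (d ν) • MvPowerSeries.monomial (d - Finsupp.single ν 1) c := by
  ext u
  rw [coeff_pderiv, map_nsmul, coeff_monomial, coeff_monomial]
  by_cases h : u + Finsupp.single ν 1 = d
  · rw [if_pos h, if_pos (by rw [← h, add_tsub_cancel_right])]
    have huν : u ν + 1 = d ν := by
      have := Finsupp.ext_iff.mp h ν
      simpa [Finsupp.add_apply, Finsupp.single_apply] using this
    rw [← huν]
    simp [nsmul_eq_mul]
  · rw [if_neg h, mul_zero]
    by_cases hu : u = d - Finsupp.single ν 1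
    · have hdν : d ν = 0 := by
        by_contra hdν
        exact h (by rw [hu, tsub_add_cancel_of_le (Finsupp.single_le_iff.mpr (by omega))])
      rw [if_pos hu, hdν, zero_smul]
    · rw [if_neg hu, smul_zero]

end FD

namespace FD

variable {K : Type*} [Field K] {s : ℕ}

local notation "R" => MvPowerSeries (Fin s) K

/-- exponents of total degree < N -/
def expSet (N : ℕ) : Finset (Fin s →₀ ℕ) :=
  (Finset.Iic (Finsupp.equivFunOnFinite.symm fun _ => N)).filter fun d => deg d < N

lemma mem_expSet {N : ℕ} {d : Fin s →₀ ℕ} : d ∈ expSet (s := s) N ↔ deg d < N := by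
  rw [expSet, Finset.mem_filter, Finset.mem_Iic]
  refine ⟨fun h => h.2, fun h => ⟨?_, h⟩⟩
  intro ν
  have h1 : d ν ≤ deg d := apply_le_deg d ν
  have h2 : (Finsupp.equivFunOnFinite.symm fun _ => N) ν = N := rfl
  omega

/-- product of powers of the `g ν` -/
def Pg (g : Fin s → R) (d : Fin s →₀ ℕ) : R := ∏ ν : Fin s, g ν ^ (d ν)

lemma Pg_add (g : Fin s → R) (u v : Fin s →₀ ℕ) : Pg g (u + v) = Pg g u * Pg g v := by
  rw [Pg, Pg, Pg, ← Finset.prod_mul_distrib]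
  exact Finset.prod_congr rfl fun ν _ => by rw [Finsupp.add_apply, pow_add]

lemma pow_mem_OI {a m : ℕ} {f : R} (hf : f ∈ OI (K := K) (s := s) a) : f ^ m ∈ OI (m * a) := by
  induction m with
  | zero => rw [pow_zero, Nat.zero_mul, OI_zero_top]; exact Submodule.mem_top
  | succ m ih =>
    rw [pow_succ, Nat.succ_mul]
    exact mul_mem_OI ih hf

lemma prod_mem_OI {ι : Type*} (T : Finset ι) (f : ι → R) (M : ι → ℕ)
    (h : ∀ i ∈ T, f i ∈ OI (K := K) (s := s) (M i)) :
    (∏ i ∈ T, f i) ∈ OI (∑ i ∈ T, M i) := by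
  induction T using Finset.cons_induction with
  | empty => simp only [Finset.prod_empty, Finset.sum_empty, OI_zero_top]; exact Submodule.mem_top
  | cons w T hw ih =>
    rw [Finset.prod_cons, Finset.sum_cons]
    exact mul_mem_OI (h w (Finset.mem_cons_self w T))
      (ih fun ν hν => h ν (Finset.mem_cons_of_mem hν))

lemma Pg_mem_OI {g : Fin s → R} (hg : ∀ ν, g ν ∈ OI (K := K) (s := s) 1) (d : Fin s →₀ ℕ) :
    Pg g d ∈ OI (deg d) := by
  rw [deg_eq_sum, Pg]
  refine prod_mem_OI _ _ _ fun ν _ => ?_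
  have := pow_mem_OI (m := d ν) (hg ν)
  rwa [Nat.mul_one] at this

lemma prod_monomial {ι : Type*} (T : Finset ι) (e : ι → (Fin s →₀ ℕ)) :
    (∏ i ∈ T, (MvPowerSeries.monomial (e i) 1 : R)) = MvPowerSeries.monomial (∑ i ∈ T, e i) 1 := by
  induction T using Finset.cons_induction with
  | empty => simp
  | cons w T hw ih =>
    rw [Finset.prod_cons, Finset.sum_cons, ih, MvPowerSeries.monomial_mul_monomial, one_mul]

lemma Pg_X (d : Fin s →₀ ℕ) :
    Pg (fun ν => MvPowerSeries.X ν) d = MvPowerSeries.monomial d (1 : K) := by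
  rw [Pg]
  have h1 : ∀ ν : Fin s, (MvPowerSeries.X ν : R) ^ (d ν)
      = MvPowerSeries.monomial (Finsupp.single ν (d ν)) 1 := fun ν => X_pow_eq ν (d ν)
  simp_rw [h1, prod_monomial]
  have : (∑ i : Fin s, Finsupp.single i (d i)) = d :=
    ((Finsupp.sum_single d).symm.trans (Finsupp.sum_fintype _ _ fun ν => Finsupp.single_zero ν)).symm
  rw [this]

/-- partial sums approximating substitution -/
def Tapprox (g : Fin s → R) (N : ℕ) (f : R) : R :=
  ∑ d ∈ expSet N, MvPowerSeries.coeff d f • Pg g d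

lemma Tapprox_diff {g : Fin s → R} (hg : ∀ ν, g ν ∈ OI (K := K) (s := s) 1)
    {N N' : ℕ} (h : N ≤ N') (f : R) : Tapprox g N' f - Tapprox g N f ∈ OI N := by
  have hsub : expSet (s := s) N ⊆ expSet N' :=
    fun d hd => mem_expSet.mpr (lt_of_lt_of_le (mem_expSet.mp hd) h)
  rw [Tapprox, Tapprox, ← Finset.sum_sdiff hsub, add_sub_cancel_right]
  refine Submodule.sum_mem _ fun d hd => ?_
  have hdeg : N ≤ deg d := by
    have := (Finset.mem_sdiff.mp hd).2
    rw [mem_expSet] at this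
    omega
  exact Submodule.smul_of_tower_mem _ _ (OI_mono hdeg (Pg_mem_OI hg d))

/-- substitution of `g` into `f` -/
def subst (g : Fin s → R) (f : R) : R := fun e => Tapprox g (deg e + 1) f e

lemma coeff_subst_def (g : Fin s → R) (f : R) (e : Fin s →₀ ℕ) :
    MvPowerSeries.coeff e (subst g f) = MvPowerSeries.coeff e (Tapprox g (deg e + 1) f) := rfl

lemma coeff_subst_stable {g : Fin s → R} (hg : ∀ ν, g ν ∈ OI (K := K) (s := s) 1)
    (f : R) {e : Fin s →₀ ℕ} {N : ℕ} (h : deg e < N) :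
    MvPowerSeries.coeff e (subst g f) = MvPowerSeries.coeff e (Tapprox g N f) := by
  rw [coeff_subst_def]
  rcases le_total (deg e + 1) N with hc | hc
  · have h0 := (Tapprox_diff hg hc f) e (by omega)
    rw [map_sub, sub_eq_zero] at h0
    exact h0.symm
  · have h0 := (Tapprox_diff hg hc f) e (by omega)
    rw [map_sub, sub_eq_zero] at h0
    exact h0

end FD

namespace FD

variable {K : Type*} [Field K] {s : ℕ}

local notation "R" => MvPowerSeries (Fin s) K

lemma subst_sub_Tapprox {g : Fin s → R} (hg : ∀ ν, g ν ∈ OI (K := K) (s := s) 1)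
    (f : R) (N : ℕ) : subst g f - Tapprox g N f ∈ OI N := by
  intro e he
  rw [map_sub, coeff_subst_stable hg f he, sub_self]

lemma subst_mem_OI {g : Fin s → R} (hg : ∀ ν, g ν ∈ OI (K := K) (s := s) 1)
    {M : ℕ} {f : R} (hf : f ∈ OI M) : subst g f ∈ OI M := by
  intro e he
  rw [coeff_subst_def, Tapprox, map_sum]
  refine Finset.sum_eq_zero fun d hd => ?_
  have : deg d < M := lt_of_lt_of_le (by exact_mod_cast mem_expSet.mp hd) (by omega)
  rw [hf d this, zero_smul, map_zero]

lemma Tapprox_add (g : Fin s → R) (N : ℕ) (f₁ f₂ : R) :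
    Tapprox g N (f₁ + f₂) = Tapprox g N f₁ + Tapprox g N f₂ := by
  rw [Tapprox, Tapprox, Tapprox, ← Finset.sum_add_distrib]
  exact Finset.sum_congr rfl fun d _ => by rw [map_add, add_smul]

lemma subst_add (g : Fin s → R) (f₁ f₂ : R) :
    subst g (f₁ + f₂) = subst g f₁ + subst g f₂ := by
  ext e
  rw [map_add, coeff_subst_def, coeff_subst_def, coeff_subst_def, Tapprox_add, map_add]

lemma subst_smul (g : Fin s → R) (c : K) (f : R) : subst g (c • f) = c • subst g f := by
  ext e
  have h2 : Tapprox g (deg e + 1) (c • f) = c • Tapprox g (deg e + 1) f := by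
    rw [Tapprox, Tapprox, Finset.smul_sum]
    refine Finset.sum_congr rfl fun d _ => ?_
    rw [LinearMap.map_smul_of_tower, smul_assoc]
  rw [coeff_subst_def, h2, LinearMap.map_smul_of_tower, LinearMap.map_smul_of_tower,
    coeff_subst_def]

lemma subst_zero (g : Fin s → R) : subst g 0 = 0 := by
  ext e
  rw [coeff_subst_def, Tapprox, map_sum]
  refine (Finset.sum_eq_zero fun d _ => ?_).trans (map_zero _).symm
  rw [map_zero, zero_smul, map_zero]

lemma subst_sub (g : Fin s → R) (f₁ f₂ : R) :
    subst g (f₁ - f₂) = subst g f₁ - subst g f₂ := by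
  have h := subst_add g (f₁ - f₂) f₂
  rw [sub_add_cancel] at h
  rw [h]; ring

lemma subst_one (g : Fin s → R) : subst g 1 = 1 := by
  ext e
  rw [coeff_subst_def, Tapprox]
  have h0 : (0 : Fin s →₀ ℕ) ∈ expSet (s := s) (deg e + 1) := mem_expSet.mpr (by rw [deg_zero]; omega)
  rw [Finset.sum_eq_single 0]
  · rw [MvPowerSeries.coeff_one, if_pos rfl, one_smul]
    have : Pg g 0 = 1 := by
      rw [Pg]
      exact Finset.prod_eq_one fun ν _ => by rw [Finsupp.coe_zero, Pi.zero_apply, pow_zero]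
    rw [this]
  · intro d _ hd
    rw [MvPowerSeries.coeff_one, if_neg hd, zero_smul]
  · exact fun h => absurd h0 h

lemma Tapprox_mul_est {g : Fin s → R} (hg : ∀ ν, g ν ∈ OI (K := K) (s := s) 1)
    (N : ℕ) (f₁ f₂ : R) :
    Tapprox g N (f₁ * f₂) - Tapprox g N f₁ * Tapprox g N f₂ ∈ OI N := by
  classical
  have hL : Tapprox g N (f₁ * f₂) =
      ∑ p ∈ (expSet (s := s) N) ×ˢ (expSet (s := s) N),
        (if deg (p.1 + p.2) < N then
          (MvPowerSeries.coeff p.1 f₁ * MvPowerSeries.coeff p.2 f₂) • Pg g (p.1 + p.2)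
         else 0) := by
    rw [Tapprox]
    have step1 : ∀ d ∈ expSet (s := s) N,
        MvPowerSeries.coeff d (f₁ * f₂) • Pg g d =
        ∑ p ∈ (expSet (s := s) N) ×ˢ (expSet (s := s) N),
          (if p.1 + p.2 = d then
            (MvPowerSeries.coeff p.1 f₁ * MvPowerSeries.coeff p.2 f₂) • Pg g (p.1 + p.2)
           else 0) := by
      intro d hd
      rw [coeff_mul, Finset.sum_smul, ← Finset.sum_filter]
      have hset : (expSet (s := s) N ×ˢ expSet (s := s) N).filter (fun p => p.1 + p.2 = d)
          = Finset.HasAntidiagonal.antidiagonal d := by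
        ext p
        rw [Finset.mem_filter, Finset.HasAntidiagonal.mem_antidiagonal, Finset.mem_product, mem_expSet, mem_expSet]
        constructor
        · exact fun h => h.2
        · intro h
          have h1 : deg p.1 + deg p.2 = deg d := by rw [← deg_add, h]
          have h2 : deg d < N := mem_expSet.mp hd
          exact ⟨⟨by omega, by omega⟩, h⟩
      rw [← hset]
      refine (Finset.sum_congr rfl fun p hp => ?_).symm
      rw [(Finset.mem_filter.mp hp).2]
    rw [Finset.sum_congr rfl step1, Finset.sum_comm]
    refine Finset.sum_congr rfl fun p _ => ?_
    rw [Finset.sum_ite_eq]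
    congr 1
    · rw [eq_iff_iff, mem_expSet]
  have hR : Tapprox g N f₁ * Tapprox g N f₂ =
      ∑ p ∈ (expSet (s := s) N) ×ˢ (expSet (s := s) N),
        (MvPowerSeries.coeff p.1 f₁ * MvPowerSeries.coeff p.2 f₂) • Pg g (p.1 + p.2) := by
    rw [Tapprox, Tapprox, Finset.sum_mul_sum, ← Finset.sum_product']
    refine Finset.sum_congr rfl fun p _ => ?_
    rw [smul_mul_smul_comm, Pg_add, mul_smul]
  rw [hL, hR, ← Finset.sum_sub_distrib]
  refine Submodule.sum_mem _ fun p _ => ?_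
  by_cases h : deg (p.1 + p.2) < N
  · rw [if_pos h, sub_self]
    exact Submodule.zero_mem _
  · rw [if_neg h, zero_sub]
    refine Submodule.neg_mem _ (Submodule.smul_of_tower_mem _ _ ?_)
    exact OI_mono (by omega) (Pg_mem_OI hg _)

lemma subst_mul {g : Fin s → R} (hg : ∀ ν, g ν ∈ OI (K := K) (s := s) 1) (f₁ f₂ : R) :
    subst g (f₁ * f₂) = subst g f₁ * subst g f₂ := by
  ext e
  set N := deg e + 1 with hN
  have he : deg e < N := by omega
  rw [coeff_subst_stable hg _ he, MvPowerSeries.coeff_mul]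
  have hstep : ∀ p ∈ Finset.HasAntidiagonal.antidiagonal e,
      MvPowerSeries.coeff p.1 (subst g f₁) * MvPowerSeries.coeff p.2 (subst g f₂)
      = MvPowerSeries.coeff p.1 (Tapprox g N f₁) * MvPowerSeries.coeff p.2 (Tapprox g N f₂) := by
    intro p hp
    have hpe := Finset.HasAntidiagonal.mem_antidiagonal.mp hp
    have hdeg : deg p.1 + deg p.2 = deg e := by rw [← deg_add, hpe]
    rw [coeff_subst_stable hg _ (show deg p.1 < N by omega),
      coeff_subst_stable hg _ (show deg p.2 < N by omega)]
  rw [Finset.sum_congr rfl hstep, ← MvPowerSeries.coeff_mul]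
  have := (Tapprox_mul_est hg N f₁ f₂) e he
  rw [map_sub, sub_eq_zero] at this
  exact this

end FD



namespace FD

variable {K : Type*} [Field K] {s : ℕ}

local notation "R" => MvPowerSeries (Fin s) K

lemma Pg_single (g : Fin s → R) (ν : Fin s) : Pg g (Finsupp.single ν 1) = g ν := by
  rw [Pg, Finset.prod_eq_single ν]
  · rw [Finsupp.single_eq_same, pow_one]
  · intro μ _ hμ
    rw [Finsupp.single_apply, if_neg fun h => hμ h.symm, pow_zero]
  · exact fun h => absurd (Finset.mem_univ ν) h

lemma subst_X {g : Fin s → R} (hg : ∀ ν, g ν ∈ OI (K := K) (s := s) 1) (ν : Fin s) :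
    subst g (MvPowerSeries.X ν) = g ν := by
  ext e
  rw [coeff_subst_stable hg _ (show deg e < deg e + 2 by omega), Tapprox,
    Finset.sum_eq_single (Finsupp.single ν 1)]
  · rw [MvPowerSeries.coeff_X, if_pos rfl, one_smul, Pg_single]
  · intro d _ hd
    rw [MvPowerSeries.coeff_X, if_neg hd, zero_smul]
  · intro h
    exact absurd (mem_expSet.mpr (by rw [deg_single]; omega)) h

lemma subst_monomial {g : Fin s → R} (hg : ∀ ν, g ν ∈ OI (K := K) (s := s) 1)
    (d : Fin s →₀ ℕ) (c : K) :
    subst g (MvPowerSeries.monomial d c) = c • Pg g d := by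
  ext e
  rw [coeff_subst_stable hg _ (show deg e < deg e + deg d + 1 by omega), Tapprox,
    Finset.sum_eq_single d]
  · rw [MvPowerSeries.coeff_monomial_same, LinearMap.map_smul_of_tower]
  · intro b _ hb
    rw [MvPowerSeries.coeff_monomial_ne hb, zero_smul]
  · intro h
    exact absurd (mem_expSet.mpr (by omega)) h

/-- substitution as a `K`-algebra homomorphism -/
def substHom (g : Fin s → R) (hg : ∀ ν, g ν ∈ OI (K := K) (s := s) 1) : R →ₐ[K] R where
  toFun := subst g
  map_one' := subst_one g
  map_mul' := subst_mul hg
  map_zero' := subst_zero g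
  map_add' := subst_add g
  commutes' := fun r => by
    show subst g (algebraMap K _ r) = algebraMap K _ r
    rw [Algebra.algebraMap_eq_smul_one, subst_smul, subst_one]

lemma substHom_apply (g : Fin s → R) (hg : ∀ ν, g ν ∈ OI (K := K) (s := s) 1) (f : R) :
    substHom g hg f = subst g f := rfl

/-- truncation of a power series (as a power series) -/
def truncP (N : ℕ) (f : R) : R :=
  ∑ d ∈ expSet N, MvPowerSeries.coeff d f • MvPowerSeries.monomial d 1

lemma truncP_sub_mem (N : ℕ) (f : R) : f - truncP N f ∈ OI (K := K) (s := s) N := by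
  intro e he
  rw [map_sub, truncP, map_sum]
  have : ∀ d ∈ expSet (s := s) N,
      MvPowerSeries.coeff e (MvPowerSeries.coeff d f • MvPowerSeries.monomial d 1)
      = if e = d then MvPowerSeries.coeff d f else 0 := by
    intro d _
    rw [LinearMap.map_smul_of_tower, MvPowerSeries.coeff_monomial]
    by_cases h : e = d
    · rw [if_pos h, if_pos h, smul_eq_mul, mul_one]
    · rw [if_neg h, if_neg h, smul_zero]
  rw [Finset.sum_congr rfl this, Finset.sum_ite_eq, if_pos (mem_expSet.mpr he), sub_self]

/-- two filtration-preserving algebra endomorphisms agreeing on the variables agree -/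
lemma algHom_ext_filtration {ψ₁ ψ₂ : MvPowerSeries (Fin s) K →ₐ[K] MvPowerSeries (Fin s) K}
    (h₁ : ∀ M (f : R), f ∈ OI M → ψ₁ f ∈ OI M)
    (h₂ : ∀ M (f : R), f ∈ OI M → ψ₂ f ∈ OI M)
    (hX : ∀ ν, ψ₁ (MvPowerSeries.X ν) = ψ₂ (MvPowerSeries.X ν)) : ψ₁ = ψ₂ := by
  refine AlgHom.ext fun f => ?_
  ext e
  set N := deg e + 1 with hN
  have hmono : ∀ (ψ : MvPowerSeries (Fin s) K →ₐ[K] MvPowerSeries (Fin s) K),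
      ψ (truncP N f) = ∑ d ∈ expSet (s := s) N,
        MvPowerSeries.coeff d f • ∏ ν : Fin s, (ψ (MvPowerSeries.X ν)) ^ (d ν) := by
    intro ψ
    rw [truncP, map_sum]
    refine Finset.sum_congr rfl fun d _ => ?_
    rw [Algebra.smul_def, map_mul, AlgHom.commutes, ← Algebra.smul_def]
    congr 1
    rw [← Pg_X (K := K) d, Pg, map_prod]
    exact Finset.prod_congr rfl fun ν _ => by rw [map_pow]
  have key : ∀ (ψ : MvPowerSeries (Fin s) K →ₐ[K] MvPowerSeries (Fin s) K),
      (∀ M (f : R), f ∈ OI M → ψ f ∈ OI M) →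
      MvPowerSeries.coeff e (ψ f) = MvPowerSeries.coeff e (ψ (truncP N f)) := by
    intro ψ hψ
    have hdecomp : ψ f = ψ (truncP N f) + ψ (f - truncP N f) := by
      rw [← map_add, add_sub_cancel]
    rw [hdecomp, map_add, hψ N _ (truncP_sub_mem N f) e (by omega), add_zero]
  rw [key ψ₁ h₁, key ψ₂ h₂, hmono ψ₁, hmono ψ₂]
  congr 1
  refine Finset.sum_congr rfl fun d _ => ?_
  congr 1
  exact Finset.prod_congr rfl fun ν _ => by rw [hX ν]

lemma substHom_comp {g h : Fin s → R} (hg : ∀ ν, g ν ∈ OI (K := K) (s := s) 1)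
    (hh : ∀ ν, h ν ∈ OI (K := K) (s := s) 1) :
    (substHom g hg).comp (substHom h hh)
      = substHom (fun ν => subst g (h ν)) (fun ν => subst_mem_OI hg (hh ν)) := by
  refine algHom_ext_filtration (fun M f hf => ?_) (fun M f hf => ?_) (fun ν => ?_)
  · exact subst_mem_OI hg (subst_mem_OI hh hf)
  · exact subst_mem_OI (fun ν => subst_mem_OI hg (hh ν)) hf
  · show subst g (subst h (MvPowerSeries.X ν)) = subst (fun ν => subst g (h ν)) (MvPowerSeries.X ν)
    rw [subst_X hh, subst_X (fun ν => subst_mem_OI hg (hh ν))]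

lemma substHom_X_eq_id :
    substHom (fun ν => (MvPowerSeries.X ν : R)) (fun ν => X_mem_OI ν) = AlgHom.id K _ := by
  refine algHom_ext_filtration (fun M f hf => subst_mem_OI (fun ν => X_mem_OI ν) hf)
    (fun M f hf => hf) (fun ν => ?_)
  show subst (fun ν => (MvPowerSeries.X ν : R)) (MvPowerSeries.X ν) = MvPowerSeries.X ν
  rw [subst_X (fun ν => X_mem_OI ν)]

end FD

namespace FD

variable {K : Type*} [Field K] {s : ℕ}

local notation "R" => MvPowerSeries (Fin s) K

/-- limits of Cauchy sequences for the filtration -/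
lemma limOf (c₀ : ℕ) (F : ℕ → R) (hF : ∀ j, F (j + 1) - F j ∈ OI (K := K) (s := s) (j + 1 + c₀)) :
    ∃ L : R, ∀ j, L - F j ∈ OI (j + c₀) := by
  have htel : ∀ i j, i ≤ j → F j - F i ∈ OI (K := K) (s := s) (i + 1 + c₀) := by
    intro i j hij
    induction j, hij using Nat.le_induction with
    | base => rw [sub_self]; exact Submodule.zero_mem _
    | succ j hij ih =>
      have : F (j + 1) - F i = (F (j + 1) - F j) + (F j - F i) := by ring
      rw [this]
      exact Submodule.add_mem _ (OI_mono (by omega) (hF j)) ih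
  refine ⟨fun d => F (deg d + 1) d, fun j => ?_⟩
  intro e he
  have hL : MvPowerSeries.coeff e (fun d => F (deg d + 1) d : R) =
      MvPowerSeries.coeff e (F (deg e + 1)) := rfl
  have hsub := map_sub (MvPowerSeries.coeff e : MvPowerSeries (Fin s) K →ₗ[K] K) (fun d => F (deg d + 1) d : R) (F j)
  refine hsub.trans ((congrArg (· - MvPowerSeries.coeff e (F j)) hL).trans ?_)
  rcases le_total (deg e + 1) j with hc | hc
  · have := htel (deg e + 1) j hc
    have h0 := this e (by omega)
    rw [map_sub, sub_eq_zero] at h0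
    rw [← h0, sub_self]
  · have := htel j (deg e + 1) hc
    have h0 := this e (by omega)
    rw [map_sub, sub_eq_zero] at h0
    rw [h0, sub_self]

lemma pow_sub_mem {c : ℕ} {a b : R} (ha : a ∈ OI (K := K) (s := s) 1)
    (hab : a - b ∈ OI (c + 1)) (j : ℕ) : a ^ j - b ^ j ∈ OI (j + c) := by
  have hb : b ∈ OI (K := K) (s := s) 1 := by
    have := Submodule.sub_mem _ ha (OI_mono (by omega) hab)
    simpa using this
  induction j with
  | zero => simp only [pow_zero, sub_self]; exact Submodule.zero_mem _
  | succ j ih =>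
    have hexp : a ^ (j + 1) - b ^ (j + 1) = a * (a ^ j - b ^ j) + (a - b) * b ^ j := by ring
    rw [hexp]
    refine Submodule.add_mem _ (OI_mono (by omega) (mul_mem_OI ha ih)) ?_
    have hbj : b ^ j ∈ OI (K := K) (s := s) j := by
      have := pow_mem_OI (m := j) hb
      rwa [Nat.mul_one] at this
    have := mul_mem_OI hab hbj
    exact OI_mono (by omega) this

lemma prod_sub_mem_graded {c : ℕ} (T : Finset (Fin s)) (F G : Fin s → R) (M : Fin s → ℕ)
    (hF : ∀ ν ∈ T, F ν ∈ OI (K := K) (s := s) (M ν))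
    (hG : ∀ ν ∈ T, G ν ∈ OI (M ν))
    (hFG : ∀ ν ∈ T, F ν - G ν ∈ OI (M ν + c)) :
    (∏ ν ∈ T, F ν) - (∏ ν ∈ T, G ν) ∈ OI ((∑ ν ∈ T, M ν) + c) := by
  induction T using Finset.cons_induction with
  | empty => simp only [Finset.prod_empty, sub_self]; exact Submodule.zero_mem _
  | cons w T hw ih =>
    rw [Finset.prod_cons, Finset.prod_cons, Finset.sum_cons]
    have hexp : F w * ∏ ν ∈ T, F ν - G w * ∏ ν ∈ T, G ν
        = F w * ((∏ ν ∈ T, F ν) - ∏ ν ∈ T, G ν) + (F w - G w) * ∏ ν ∈ T, G ν := by ring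
    rw [hexp]
    refine Submodule.add_mem _ ?_ ?_
    · have := mul_mem_OI (hF w (Finset.mem_cons_self w T))
        (ih (fun ν hν => hF ν (Finset.mem_cons_of_mem hν))
            (fun ν hν => hG ν (Finset.mem_cons_of_mem hν))
            (fun ν hν => hFG ν (Finset.mem_cons_of_mem hν)))
      exact OI_mono (by omega) this
    · have hprod : (∏ ν ∈ T, G ν) ∈ OI (K := K) (s := s) (∑ ν ∈ T, M ν) :=
        prod_mem_OI T G M fun ν hν => hG ν (Finset.mem_cons_of_mem hν)
      have := mul_mem_OI (hFG w (Finset.mem_cons_self w T)) hprod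
      exact OI_mono (by omega) this

lemma Pg_sub_monomial {c : ℕ} {g : Fin s → R} (hg1 : ∀ ν, g ν ∈ OI (K := K) (s := s) 1)
    (hg2 : ∀ ν, g ν - MvPowerSeries.X ν ∈ OI (c + 1)) (d : Fin s →₀ ℕ) :
    Pg g d - MvPowerSeries.monomial d 1 ∈ OI (deg d + c) := by
  rw [← Pg_X d, Pg, Pg, deg_eq_sum]
  refine prod_sub_mem_graded _ _ _ (fun ν => d ν) (fun ν _ => ?_) (fun ν _ => ?_) (fun ν _ => ?_)
  · have := pow_mem_OI (m := d ν) (hg1 ν)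
    rwa [Nat.mul_one] at this
  · have := pow_mem_OI (m := d ν) (X_mem_OI (K := K) ν)
    rwa [Nat.mul_one] at this
  · exact pow_sub_mem (hg1 ν) (hg2 ν) (d ν)

lemma subst_truncP (g : Fin s → R) (hg : ∀ ν, g ν ∈ OI (K := K) (s := s) 1) (N : ℕ) (f : R) :
    subst g (truncP N f) = ∑ d ∈ expSet N, MvPowerSeries.coeff d f • Pg g d := by
  have : subst g (truncP N f) = substHom g hg (truncP N f) := rfl
  rw [this, truncP, map_sum]
  refine Finset.sum_congr rfl fun d _ => ?_
  rw [Algebra.smul_def, map_mul, AlgHom.commutes, ← Algebra.smul_def, substHom_apply,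
    subst_monomial hg, one_smul]

/-- drift estimate: substitution along a perturbation of the identity moves elements of
`OI M` by something in `OI (M + c)` -/
lemma drift {c : ℕ} {g : Fin s → R} (hg1 : ∀ ν, g ν ∈ OI (K := K) (s := s) 1)
    (hg2 : ∀ ν, g ν - MvPowerSeries.X ν ∈ OI (c + 1)) {M : ℕ} {r : R} (hr : r ∈ OI M) :
    subst g r - r ∈ OI (M + c) := by
  intro e he
  set N := deg e + 1 with hN
  have hdecomp : subst g r - r
      = (subst g (truncP N r) - truncP N r) + (subst g (r - truncP N r) - (r - truncP N r)) := by
    rw [subst_sub]; ring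
  rw [hdecomp, map_add]
  have h2 : MvPowerSeries.coeff e (subst g (r - truncP N r) - (r - truncP N r)) = 0 := by
    have hmem : subst g (r - truncP N r) - (r - truncP N r) ∈ OI (K := K) (s := s) N :=
      Submodule.sub_mem _ (subst_mem_OI hg1 (truncP_sub_mem N r)) (truncP_sub_mem N r)
    exact hmem e (by omega)
  rw [h2, add_zero]
  have h1 : subst g (truncP N r) - truncP N r
      = ∑ d ∈ expSet N, MvPowerSeries.coeff d r • (Pg g d - MvPowerSeries.monomial d 1) := by
    rw [subst_truncP g hg1, truncP, ← Finset.sum_sub_distrib]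
    exact Finset.sum_congr rfl fun d _ => by rw [smul_sub]
  rw [h1]
  have hmem : (∑ d ∈ expSet (s := s) N,
      MvPowerSeries.coeff d r • (Pg g d - MvPowerSeries.monomial d 1)) ∈ OI (M + c) := by
    refine Submodule.sum_mem _ fun d _ => ?_
    by_cases hd : deg d < M
    · rw [hr d hd, zero_smul]
      exact Submodule.zero_mem _
    · exact Submodule.smul_of_tower_mem _ _
        (OI_mono (by omega) (Pg_sub_monomial hg1 hg2 d))
  exact hmem e he

/-- continuity of substitution in `g` -/
lemma subst_congr_mem {N : ℕ} {g g' : Fin s → R} (hg : ∀ ν, g ν ∈ OI (K := K) (s := s) 1)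
    (hg' : ∀ ν, g' ν ∈ OI 1) (hgg : ∀ ν, g ν - g' ν ∈ OI N) (f : R) :
    subst g f - subst g' f ∈ OI N := by
  intro e he
  set N' := deg e + 1 with hN'
  have hdecomp : subst g f - subst g' f
      = (subst g (truncP N' f) - subst g' (truncP N' f))
        + (subst g (f - truncP N' f) - subst g' (f - truncP N' f)) := by
    rw [subst_sub, subst_sub]; ring
  rw [hdecomp, map_add]
  have h2 : MvPowerSeries.coeff e
      (subst g (f - truncP N' f) - subst g' (f - truncP N' f)) = 0 := by
    have hmem : subst g (f - truncP N' f) - subst g' (f - truncP N' f) ∈ OI (K := K) (s := s) N' :=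
      Submodule.sub_mem _ (subst_mem_OI hg (truncP_sub_mem N' f))
        (subst_mem_OI hg' (truncP_sub_mem N' f))
    exact hmem e (by omega)
  rw [h2, add_zero]
  have h1 : subst g (truncP N' f) - subst g' (truncP N' f)
      = ∑ d ∈ expSet N', MvPowerSeries.coeff d f • (Pg g d - Pg g' d) := by
    rw [subst_truncP g hg, subst_truncP g' hg', ← Finset.sum_sub_distrib]
    exact Finset.sum_congr rfl fun d _ => by rw [smul_sub]
  rw [h1]
  have hPg : ∀ d : Fin s →₀ ℕ, Pg g d - Pg g' d ∈ OI (K := K) (s := s) N := by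
    intro d
    rw [Pg, Pg]
    have hpow : ∀ ν : Fin s, g ν ^ (d ν) - g' ν ^ (d ν) ∈ OI (K := K) (s := s) N := by
      intro ν
      induction (d ν) with
      | zero => simp only [pow_zero, sub_self]; exact Submodule.zero_mem _
      | succ j ih =>
        have hexp : g ν ^ (j + 1) - g' ν ^ (j + 1)
            = g ν * (g ν ^ j - g' ν ^ j) + (g ν - g' ν) * g' ν ^ j := by ring
        rw [hexp]
        refine Submodule.add_mem _ ?_ ?_
        · have := mul_mem_OI (hg ν) ih
          exact OI_mono (by omega) this
        · exact Ideal.mul_mem_right _ _ (hgg ν)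
    -- product difference, ungraded
    induction (Finset.univ : Finset (Fin s)) using Finset.cons_induction with
    | empty => simp only [Finset.prod_empty, sub_self]; exact Submodule.zero_mem _
    | cons w T hw ih =>
      rw [Finset.prod_cons, Finset.prod_cons]
      have hexp : g w ^ (d w) * ∏ ν ∈ T, g ν ^ (d ν)
            - g' w ^ (d w) * ∏ ν ∈ T, g' ν ^ (d ν)
          = g w ^ (d w) * ((∏ ν ∈ T, g ν ^ (d ν)) - ∏ ν ∈ T, g' ν ^ (d ν))
            + (g w ^ (d w) - g' w ^ (d w)) * ∏ ν ∈ T, g' ν ^ (d ν) := by ring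
      rw [hexp]
      exact Submodule.add_mem _ (Ideal.mul_mem_left _ _ ih)
        (Ideal.mul_mem_right _ _ (hpow w))
  have hmem : (∑ d ∈ expSet (s := s) N', MvPowerSeries.coeff d f • (Pg g d - Pg g' d))
      ∈ OI (K := K) (s := s) N :=
    Submodule.sum_mem _ fun d _ => Submodule.smul_of_tower_mem _ _ (hPg d)
  exact hmem e he

end FD

namespace FD

variable {K : Type*} [Field K] {s : ℕ}

local notation "R" => MvPowerSeries (Fin s) K

lemma sub_X_OI_one {g : Fin s → R} (hg2 : ∀ ν, g ν - MvPowerSeries.X ν ∈ OI (K := K) (s := s) 2)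
    (ν : Fin s) : g ν ∈ OI 1 := by
  have := Submodule.add_mem _ (OI_mono (by omega) (hg2 ν)) (X_mem_OI (K := K) ν)
  simpa using this

lemma exists_right_inverse {g : Fin s → R} (hg2 : ∀ ν, g ν - MvPowerSeries.X ν ∈ OI (K := K) (s := s) 2) :
    ∃ h : Fin s → R, (∀ ν, h ν - MvPowerSeries.X ν ∈ OI 2) ∧
      ∀ ν, subst g (h ν) = MvPowerSeries.X ν := by
  have hg1 : ∀ ν, g ν ∈ OI (K := K) (s := s) 1 := sub_X_OI_one hg2
  have key : ∀ ν : Fin s, ∃ L : R, L - MvPowerSeries.X ν ∈ OI 2 ∧ subst g L = MvPowerSeries.X ν := by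
    intro ν
    set F : ℕ → R := fun j => Nat.rec (MvPowerSeries.X ν)
      (fun _ fj => fj - (subst g fj - MvPowerSeries.X ν)) j with hF
    have hF0 : F 0 = MvPowerSeries.X ν := rfl
    have hFsucc : ∀ j, F (j + 1) = F j - (subst g (F j) - MvPowerSeries.X ν) := fun j => rfl
    have hInv : ∀ j, subst g (F j) - MvPowerSeries.X ν ∈ OI (K := K) (s := s) (j + 2) := by
      intro j
      induction j with
      | zero => rw [hF0, subst_X hg1]; exact hg2 ν
      | succ j ih =>
        rw [hFsucc j, subst_sub, subst_sub]
        have heq : subst g (F j) - (subst g (subst g (F j)) - subst g (MvPowerSeries.X ν))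
            - MvPowerSeries.X ν
            = -((subst g ((subst g (F j)) - MvPowerSeries.X ν))
                - ((subst g (F j)) - MvPowerSeries.X ν)) := by
          rw [subst_sub, subst_X hg1]; ring
        rw [heq]
        refine Submodule.neg_mem _ ?_
        have := drift (c := 1) hg1 (fun μ => hg2 μ) ih
        exact OI_mono (by omega) this
    have hCauchy : ∀ j, F (j + 1) - F j ∈ OI (K := K) (s := s) (j + 1 + 1) := by
      intro j
      rw [hFsucc j]
      have heq : F j - (subst g (F j) - MvPowerSeries.X ν) - F j
          = -(subst g (F j) - MvPowerSeries.X ν) := by ring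
      rw [heq]
      exact Submodule.neg_mem _ (OI_mono (by omega) (hInv j))
    obtain ⟨L, hL⟩ := limOf 1 F hCauchy
    refine ⟨L, ?_, ?_⟩
    · have h1 : L - F 1 ∈ OI (K := K) (s := s) 2 := hL 1
      have h2 : F 1 - F 0 ∈ OI (K := K) (s := s) 2 := hCauchy 0
      have := Submodule.add_mem _ h1 h2
      rw [sub_add_sub_cancel, hF0] at this
      exact this
    · refine eq_of_sub_eq_zero ?_
      refine eq_zero_of_forall_OI fun M => ?_
      refine OI_mono (show M ≤ M + 1 by omega) ?_
      have hdecomp : subst g L - MvPowerSeries.X ν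
          = subst g (L - F M) + (subst g (F M) - MvPowerSeries.X ν) := by
        rw [subst_sub]; ring
      rw [hdecomp]
      exact Submodule.add_mem _ (subst_mem_OI hg1 (hL M)) (OI_mono (by omega) (hInv M))
  choose h hmem hsub using key
  exact ⟨h, hmem, hsub⟩

lemma comp_eq_id {g h : Fin s → R} (hg1 : ∀ ν, g ν ∈ OI (K := K) (s := s) 1)
    (hh1 : ∀ ν, h ν ∈ OI 1) (hgh : ∀ ν, subst g (h ν) = MvPowerSeries.X ν) :
    (substHom g hg1).comp (substHom h hh1) = AlgHom.id K (MvPowerSeries (Fin s) K) := by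
  refine algHom_ext_filtration (fun M f hf => subst_mem_OI hg1 (subst_mem_OI hh1 hf))
    (fun M f hf => hf) (fun ν => ?_)
  show subst g (subst h (MvPowerSeries.X ν)) = MvPowerSeries.X ν
  rw [subst_X hh1, hgh ν]

lemma exists_algEquiv {g : Fin s → R}
    (hg2 : ∀ ν, g ν - MvPowerSeries.X ν ∈ OI (K := K) (s := s) 2) :
    ∃ φ : MvPowerSeries (Fin s) K ≃ₐ[K] MvPowerSeries (Fin s) K, ∀ f, φ f = subst g f := by
  have hg1 := sub_X_OI_one hg2
  obtain ⟨h, hh2, hgh⟩ := exists_right_inverse hg2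
  have hh1 := sub_X_OI_one hh2
  obtain ⟨h', hh'2, hhh'⟩ := exists_right_inverse hh2
  have hh'1 := sub_X_OI_one hh'2
  have c1 : (substHom g hg1).comp (substHom h hh1) = AlgHom.id K _ := comp_eq_id hg1 hh1 hgh
  have c2 : (substHom h hh1).comp (substHom h' hh'1) = AlgHom.id K _ := comp_eq_id hh1 hh'1 hhh'
  have hgh' : substHom g hg1 = substHom h' hh'1 := by
    have e1 : ((substHom g hg1).comp (substHom h hh1)).comp (substHom h' hh'1)
        = substHom h' hh'1 := by rw [c1, AlgHom.id_comp]
    have e2 : ((substHom g hg1).comp (substHom h hh1)).comp (substHom h' hh'1)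
        = substHom g hg1 := by rw [AlgHom.comp_assoc, c2, AlgHom.comp_id]
    rw [← e1, e2]
  have c3 : (substHom h hh1).comp (substHom g hg1) = AlgHom.id K _ := by rw [hgh', c2]
  refine ⟨AlgEquiv.ofAlgHom (substHom g hg1) (substHom h hh1) c1 c3, fun f => rfl⟩

end FD

namespace FD

variable {K : Type*} [Field K] {s : ℕ}

local notation "R" => MvPowerSeries (Fin s) K

lemma B1 {c : ℕ} {Eν : R} (hE : Eν ∈ OI (K := K) (s := s) (c + 2)) {Xν : R}
    (hX : Xν ∈ OI (K := K) (s := s) 1) (j : ℕ) :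
    (Xν + Eν) ^ j - Xν ^ j - (j : R) * (Eν * Xν ^ (j - 1)) ∈ OI (j + (2 * c + 2)) := by
  induction j with
  | zero => simp only [pow_zero, Nat.cast_zero, zero_mul, sub_self, sub_zero]; exact Submodule.zero_mem _
  | succ j ih =>
    set r := (Xν + Eν) ^ j - Xν ^ j - (j : R) * (Eν * Xν ^ (j - 1)) with hr
    have hkey : (Xν + Eν) ^ (j + 1) - Xν ^ (j + 1) - ((j + 1 : ℕ) : R) * (Eν * Xν ^ ((j + 1) - 1))
        = (Xν + Eν) * r + (j : R) * (Eν * Xν ^ (j - 1) * Xν - Eν * Xν ^ j)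
          + (j : R) * (Eν * Eν * Xν ^ (j - 1)) := by
      rw [hr]
      push_cast
      ring
    rw [hkey]
    refine Submodule.add_mem _ (Submodule.add_mem _ ?_ ?_) ?_
    · have h1 : Xν + Eν ∈ OI (K := K) (s := s) 1 :=
        Submodule.add_mem _ hX (OI_mono (by omega) hE)
      exact OI_mono (by omega) (mul_mem_OI h1 ih)
    · have : (j : R) * (Eν * Xν ^ (j - 1) * Xν - Eν * Xν ^ j) = 0 := by
        cases j with
        | zero => rw [Nat.cast_zero, zero_mul]
        | succ m =>
          have h5 : Xν ^ (m + 1 - 1) * Xν = Xν ^ (m + 1) := by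
            rw [Nat.add_sub_cancel, ← pow_succ]
          rw [mul_assoc, h5, sub_self, mul_zero]
      rw [this]
      exact Submodule.zero_mem _
    · cases j with
      | zero => simp only [Nat.cast_zero, zero_mul]; exact Submodule.zero_mem _
      | succ m =>
        refine Ideal.mul_mem_left _ _ ?_
        have hXm : Xν ^ (m + 1 - 1) ∈ OI (K := K) (s := s) m := by
          rw [Nat.add_sub_cancel]
          have := pow_mem_OI (m := m) hX
          rwa [Nat.mul_one] at this
        have := mul_mem_OI (mul_mem_OI hE hE) hXm
        exact OI_mono (by omega) this

lemma Bmem {c : ℕ} {Eν : R} (hE : Eν ∈ OI (K := K) (s := s) (c + 2)) {Xν : R}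
    (hX : Xν ∈ OI (K := K) (s := s) 1) (j : ℕ) :
    (j : R) * (Eν * Xν ^ (j - 1)) ∈ OI (j + (c + 1)) := by
  cases j with
  | zero => simp only [Nat.cast_zero, zero_mul]; exact Submodule.zero_mem _
  | succ m =>
    refine Ideal.mul_mem_left _ _ ?_
    have hXm : Xν ^ (m + 1 - 1) ∈ OI (K := K) (s := s) m := by
      rw [Nat.add_sub_cancel]
      have := pow_mem_OI (m := m) hX
      rwa [Nat.mul_one] at this
    have := mul_mem_OI hE hXm
    exact OI_mono (by omega) this

lemma sum_single_apply (T : Finset (Fin s)) (d : Fin s →₀ ℕ) (μ' : Fin s) :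
    (∑ μ ∈ T, Finsupp.single μ (d μ)) μ' = if μ' ∈ T then d μ' else 0 := by
  rw [Finset.sum_apply']
  rw [Finset.sum_congr rfl fun μ _ => Finsupp.single_apply]
  rw [Finset.sum_ite_eq' T μ' (fun μ => d μ)]

lemma Bprod_eq {E : Fin s → R} (d : Fin s →₀ ℕ) (ν : Fin s) :
    ((d ν : ℕ) : R) * (E ν * (MvPowerSeries.X ν : R) ^ (d ν - 1))
        * ∏ μ ∈ Finset.univ.erase ν, (MvPowerSeries.X μ : R) ^ (d μ)
      = E ν * pderiv ν (MvPowerSeries.monomial d 1) := by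
  rw [pderiv_monomial]
  rw [mul_smul_comm, ← Nat.cast_smul_eq_nsmul R]
  cases hd : d ν with
  | zero => simp
  | succ m =>
    have hidx : d - Finsupp.single ν 1
        = Finsupp.single ν m + ∑ μ ∈ Finset.univ.erase ν, Finsupp.single μ (d μ) := by
      ext μ'
      rw [Finsupp.tsub_apply, Finsupp.add_apply, sum_single_apply, Finsupp.single_apply,
        Finsupp.single_apply]
      by_cases h : ν = μ'
      · subst h
        rw [if_pos rfl, if_pos rfl, if_neg (Finset.notMem_erase ν _)]
        omega
      · rw [if_neg h, if_neg h, if_pos (Finset.mem_erase.mpr ⟨fun hh => h hh.symm, Finset.mem_univ μ'⟩)]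
        omega
    have h2 : (MvPowerSeries.monomial (Finsupp.single ν m) 1 : R)
          * MvPowerSeries.monomial (∑ μ ∈ Finset.univ.erase ν, Finsupp.single μ (d μ)) 1
        = MvPowerSeries.monomial (Finsupp.single ν m
            + ∑ μ ∈ Finset.univ.erase ν, Finsupp.single μ (d μ)) 1 := by
      rw [MvPowerSeries.monomial_mul_monomial, one_mul]
    have hmon : MvPowerSeries.monomial (d - Finsupp.single ν 1) 1
        = (MvPowerSeries.X ν : R) ^ m
          * ∏ μ ∈ Finset.univ.erase ν, (MvPowerSeries.X μ : R) ^ (d μ) := by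
      rw [hidx, ← h2, ← X_pow_eq]
      congr 1
      rw [← prod_monomial]
      exact (Finset.prod_congr rfl fun μ _ => (X_pow_eq μ (d μ))).symm
    rw [hmon]
    push_cast
    rw [smul_eq_mul]
    ring

lemma B2 {c : ℕ} {E : Fin s → R} (hE : ∀ ν, E ν ∈ OI (K := K) (s := s) (c + 2))
    (d : Fin s →₀ ℕ) :
    Pg (fun ν => MvPowerSeries.X ν + E ν) d - MvPowerSeries.monomial d 1
      - ∑ ν : Fin s, E ν * pderiv ν (MvPowerSeries.monomial d 1)
      ∈ OI (deg d + (2 * c + 2)) := by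
  classical
  set A : Fin s → R := fun ν => (MvPowerSeries.X ν : R) ^ (d ν) with hA
  set B : Fin s → R := fun ν => ((d ν : ℕ) : R) * (E ν * (MvPowerSeries.X ν : R) ^ (d ν - 1)) with hB
  have hAmem : ∀ ν, A ν ∈ OI (K := K) (s := s) (d ν) := by
    intro ν
    have := pow_mem_OI (m := d ν) (X_mem_OI (K := K) ν)
    rwa [Nat.mul_one] at this
  have hBmem : ∀ ν, B ν ∈ OI (K := K) (s := s) (d ν + (c + 1)) :=
    fun ν => Bmem (hE ν) (X_mem_OI ν) (d ν)
  have hprodA : (∏ ν : Fin s, A ν) = MvPowerSeries.monomial d 1 := by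
    rw [hA, ← Pg_X d, Pg]
  have hsum : ∀ ν : Fin s, B ν * ∏ μ ∈ Finset.univ.erase ν, A μ
      = E ν * pderiv ν (MvPowerSeries.monomial d 1) := fun ν => Bprod_eq d ν
  -- first bracket
  have hbr1 : Pg (fun ν => MvPowerSeries.X ν + E ν) d - (∏ ν : Fin s, (B ν + A ν))
      ∈ OI (K := K) (s := s) (deg d + (2 * c + 2)) := by
    rw [Pg, deg_eq_sum]
    refine prod_sub_mem_graded (c := 2 * c + 2) _ _ _ (fun ν => d ν)
      (fun ν _ => ?_) (fun ν _ => ?_) (fun ν _ => ?_)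
    · have h1 : (MvPowerSeries.X ν + E ν : R) ∈ OI (K := K) (s := s) 1 :=
        Submodule.add_mem _ (X_mem_OI ν) (OI_mono (by omega) (hE ν))
      have := pow_mem_OI (m := d ν) h1
      rwa [Nat.mul_one] at this
    · exact Submodule.add_mem _ (OI_mono (Nat.le_add_right _ _) (hBmem ν)) (hAmem ν)
    · have := B1 (hE ν) (X_mem_OI (K := K) ν) (d ν)
      have heq : (MvPowerSeries.X ν + E ν) ^ (d ν) - (B ν + A ν)
          = (MvPowerSeries.X ν + E ν) ^ (d ν) - (MvPowerSeries.X ν : R) ^ (d ν)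
            - ((d ν : ℕ) : R) * (E ν * (MvPowerSeries.X ν : R) ^ (d ν - 1)) := by
        rw [hA, hB]; ring
      rw [heq]
      exact this
  -- second bracket via prod_add
  have hpa : (∏ ν : Fin s, (B ν + A ν))
      = ∑ t ∈ Finset.univ.powerset, (∏ ν ∈ t, B ν) * ∏ ν ∈ Finset.univ \ t, A ν :=
    Finset.prod_add B A Finset.univ
  have hsplit : Finset.univ.powerset.filter (fun t : Finset (Fin s) => t.card ≤ 1)
      = insert (∅ : Finset (Fin s)) (Finset.univ.image fun ν : Fin s => {ν}) := by
    ext t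
    rw [Finset.mem_filter, Finset.mem_insert, Finset.mem_image]
    constructor
    · rintro ⟨-, hc⟩
      rcases Nat.le_one_iff_eq_zero_or_eq_one.mp hc with h | h
      · exact Or.inl (Finset.card_eq_zero.mp h)
      · obtain ⟨a, ha⟩ := Finset.card_eq_one.mp h
        exact Or.inr ⟨a, Finset.mem_univ a, ha.symm⟩
    · rintro (rfl | ⟨a, -, rfl⟩)
      · exact ⟨Finset.mem_powerset.mpr (Finset.empty_subset _), by simp⟩
      · exact ⟨Finset.mem_powerset.mpr (Finset.subset_univ _), by simp⟩
  have hW : ∀ t ∈ Finset.univ.powerset.filter (fun t : Finset (Fin s) => ¬ t.card ≤ 1),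
      (∏ ν ∈ t, B ν) * ∏ ν ∈ Finset.univ \ t, A ν ∈ OI (K := K) (s := s) (deg d + (2 * c + 2)) := by
    intro t ht
    obtain ⟨-, hcard⟩ := Finset.mem_filter.mp ht
    have h1 : (∏ ν ∈ t, B ν) ∈ OI (K := K) (s := s) (∑ ν ∈ t, (d ν + (c + 1))) :=
      prod_mem_OI t B _ fun ν _ => hBmem ν
    have h2 : (∏ ν ∈ Finset.univ \ t, A ν) ∈ OI (K := K) (s := s) (∑ ν ∈ Finset.univ \ t, d ν) :=
      prod_mem_OI _ A _ fun ν _ => hAmem ν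
    have h3 := mul_mem_OI h1 h2
    refine OI_mono ?_ h3
    have hsum1 : ∑ ν ∈ t, (d ν + (c + 1)) = (∑ ν ∈ t, d ν) + t.card * (c + 1) := by
      rw [Finset.sum_add_distrib, Finset.sum_const, smul_eq_mul]
    have hsum2 : (∑ ν ∈ Finset.univ \ t, d ν) + (∑ ν ∈ t, d ν) = deg d := by
      rw [deg_eq_sum, Finset.sum_sdiff (Finset.subset_univ t)]
    have hc2 : 2 * (c + 1) ≤ t.card * (c + 1) :=
      Nat.mul_le_mul_right (c + 1) (by omega)
    omega
  -- assemble
  have hdecomp : Pg (fun ν => MvPowerSeries.X ν + E ν) d - MvPowerSeries.monomial d 1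
      - ∑ ν : Fin s, E ν * pderiv ν (MvPowerSeries.monomial d 1)
      = (Pg (fun ν => MvPowerSeries.X ν + E ν) d - (∏ ν : Fin s, (B ν + A ν)))
        + (∑ t ∈ Finset.univ.powerset.filter (fun t : Finset (Fin s) => ¬ t.card ≤ 1),
            (∏ ν ∈ t, B ν) * ∏ ν ∈ Finset.univ \ t, A ν) := by
    have e1 : (∏ ν : Fin s, (B ν + A ν))
        = (∑ t ∈ Finset.univ.powerset.filter (fun t : Finset (Fin s) => t.card ≤ 1),
            (∏ ν ∈ t, B ν) * ∏ ν ∈ Finset.univ \ t, A ν)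
          + (∑ t ∈ Finset.univ.powerset.filter (fun t : Finset (Fin s) => ¬ t.card ≤ 1),
            (∏ ν ∈ t, B ν) * ∏ ν ∈ Finset.univ \ t, A ν) := by
      rw [hpa, Finset.sum_filter_add_sum_filter_not]
    have e2 : (∑ t ∈ Finset.univ.powerset.filter (fun t : Finset (Fin s) => t.card ≤ 1),
          (∏ ν ∈ t, B ν) * ∏ ν ∈ Finset.univ \ t, A ν)
        = MvPowerSeries.monomial d 1
          + ∑ ν : Fin s, E ν * pderiv ν (MvPowerSeries.monomial d 1) := by
      rw [hsplit, Finset.sum_insert (by simp)]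
      congr 1
      · rw [Finset.prod_empty, one_mul, Finset.sdiff_empty, hprodA]
      · rw [Finset.sum_image (fun a _ b _ h => Finset.singleton_injective h)]
        refine Finset.sum_congr rfl fun ν _ => ?_
        rw [Finset.prod_singleton, ← hsum ν, Finset.sdiff_singleton_eq_erase]
    rw [e2] at e1
    linear_combination e1
  rw [hdecomp]
  exact Submodule.add_mem _ hbr1 (Submodule.sum_mem _ hW)

end FD

namespace FD

variable {K : Type*} [Field K] {s : ℕ}

local notation "R" => MvPowerSeries (Fin s) K

lemma pderiv_zero (ν : Fin s) : pderiv ν (0 : R) = 0 := by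
  ext d
  rw [coeff_pderiv, map_zero, mul_zero, map_zero]

lemma pderiv_sum {ι : Type*} (ν : Fin s) (T : Finset ι) (F : ι → R) :
    pderiv ν (∑ x ∈ T, F x) = ∑ x ∈ T, pderiv ν (F x) := by
  induction T using Finset.cons_induction with
  | empty => simp only [Finset.sum_empty]; exact pderiv_zero ν
  | cons w T hw ih => rw [Finset.sum_cons, Finset.sum_cons, pderiv_add, ih]

lemma taylor {c o : ℕ} {E : Fin s → R} (hE : ∀ ν, E ν ∈ OI (K := K) (s := s) (c + 2))
    {f : R} (hf : f ∈ OI o) :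
    subst (fun ν => MvPowerSeries.X ν + E ν) f - f
      - ∑ ν : Fin s, E ν * pderiv ν f ∈ OI (o + (2 * c + 2)) := by
  set g : Fin s → R := fun ν => MvPowerSeries.X ν + E ν with hgdef
  have hg1 : ∀ ν, g ν ∈ OI (K := K) (s := s) 1 := fun ν =>
    Submodule.add_mem _ (X_mem_OI ν) (OI_mono (by omega) (hE ν))
  intro e he
  set N := deg e + 1 with hN
  have hdecomp : subst g f - f - ∑ ν : Fin s, E ν * pderiv ν f
      = (subst g (truncP N f) - truncP N f - ∑ ν : Fin s, E ν * pderiv ν (truncP N f))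
        + (subst g (f - truncP N f) - (f - truncP N f)
            - ∑ ν : Fin s, E ν * pderiv ν (f - truncP N f)) := by
    rw [subst_sub]
    have h1 : ∀ ν ∈ (Finset.univ : Finset (Fin s)), E ν * pderiv ν f
        = E ν * pderiv ν (truncP N f) + E ν * pderiv ν (f - truncP N f) := by
      intro ν _
      rw [pderiv_sub]
      ring
    rw [Finset.sum_congr rfl h1, Finset.sum_add_distrib]
    ring
  rw [hdecomp, map_add]
  have htail : subst g (f - truncP N f) - (f - truncP N f)
      - ∑ ν : Fin s, E ν * pderiv ν (f - truncP N f) ∈ OI (K := K) (s := s) N := by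
    refine Submodule.sub_mem _ (Submodule.sub_mem _ ?_ ?_) ?_
    · exact subst_mem_OI hg1 (truncP_sub_mem N f)
    · exact truncP_sub_mem N f
    · refine Submodule.sum_mem _ fun ν _ => ?_
      have hp : pderiv ν (f - truncP N f) ∈ OI (K := K) (s := s) (deg e) :=
        pderiv_mem_OI (truncP_sub_mem N f) ν
      have := mul_mem_OI (hE ν) hp
      exact OI_mono (by omega) this
  rw [htail e (by omega), add_zero]
  have hps : ∀ ν : Fin s, pderiv ν (truncP N f)
      = ∑ d ∈ expSet N, MvPowerSeries.coeff d f • pderiv ν (MvPowerSeries.monomial d 1) := by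
    intro ν
    rw [truncP, pderiv_sum]
    exact Finset.sum_congr rfl fun d _ => pderiv_smul ν _ _
  have hsum2 : (∑ ν : Fin s, E ν * pderiv ν (truncP N f))
      = ∑ d ∈ expSet N, MvPowerSeries.coeff d f
          • (∑ ν : Fin s, E ν * pderiv ν (MvPowerSeries.monomial d 1)) := by
    rw [Finset.sum_congr rfl fun ν (_ : ν ∈ Finset.univ) => by rw [hps ν, Finset.mul_sum]]
    rw [Finset.sum_comm]
    refine Finset.sum_congr rfl fun d _ => ?_
    rw [Finset.smul_sum]
    exact Finset.sum_congr rfl fun ν _ => (mul_smul_comm _ _ _)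
  have hmain : subst g (truncP N f) - truncP N f
        - ∑ ν : Fin s, E ν * pderiv ν (truncP N f)
      = ∑ d ∈ expSet N, MvPowerSeries.coeff d f
          • (Pg g d - MvPowerSeries.monomial d 1
              - ∑ ν : Fin s, E ν * pderiv ν (MvPowerSeries.monomial d 1)) := by
    rw [hsum2, subst_truncP g hg1, truncP, ← Finset.sum_sub_distrib, ← Finset.sum_sub_distrib]
    exact Finset.sum_congr rfl fun d _ => by rw [smul_sub, smul_sub]
  rw [hmain]
  have hmem : (∑ d ∈ expSet (s := s) N, MvPowerSeries.coeff d f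
      • (Pg g d - MvPowerSeries.monomial d 1
          - ∑ ν : Fin s, E ν * pderiv ν (MvPowerSeries.monomial d 1)))
      ∈ OI (K := K) (s := s) (o + (2 * c + 2)) := by
    refine Submodule.sum_mem _ fun d _ => ?_
    by_cases hdo : deg d < o
    · rw [hf d hdo, zero_smul]
      exact Submodule.zero_mem _
    · exact Submodule.smul_of_tower_mem _ _ (OI_mono (by omega) (B2 hE d))
  exact hmem e he

end FD

namespace FD

variable {K : Type*} [Field K] {s m n : ℕ}

local notation "R" => MvPowerSeries (Fin s) K
local notation "Mat" => Matrix (Fin m) (Fin n) (MvPowerSeries (Fin s) K)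

lemma OI_mul_le (a b : ℕ) : OI (K := K) (s := s) a * OI b ≤ OI (a + b) :=
  Ideal.mul_le.mpr fun _ hf _ hg => mul_mem_OI hf hg

lemma matSub_mul_le {I J : Ideal R} :
    matSub (I * J) ≤ I • (matSub J : Submodule R Mat) := by
  intro Z hZ
  have hstd : ∀ (i : Fin m) (j : Fin n), ∀ r ∈ I * J,
      Matrix.single i j r ∈ I • (matSub J : Submodule R Mat) := by
    intro i j r hr
    refine Submodule.mul_induction_on hr ?_ ?_
    · intro a ha b hb
      have h1 : Matrix.single i j (a * b) = a • Matrix.single i j b := by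
        rw [Matrix.smul_single, smul_eq_mul]
      rw [h1]
      refine Submodule.smul_mem_smul ha ?_
      intro i' j'
      simp only [Matrix.single, Matrix.of_apply]
      split
      · exact hb
      · exact Submodule.zero_mem J
    · intro x y hx hy
      have h2 : Matrix.single i j (x + y)
          = Matrix.single i j x + Matrix.single i j y :=
        Matrix.single_add i j x y
      rw [h2]
      exact Submodule.add_mem _ hx hy
  rw [Matrix.matrix_eq_sum_single Z]
  exact Submodule.sum_mem _ fun i _ => Submodule.sum_mem _ fun j _ =>
    hstd i j (Z i j) (hZ i j)

lemma entries_span {G : Fin s → Mat} {b : ℕ} (hG : ∀ ν i j, G ν i j ∈ OI (K := K) (s := s) b) :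
    ∀ z ∈ Submodule.span R (Set.range G), ∀ i j, z i j ∈ OI b := by
  intro z hz
  refine Submodule.span_induction ?_ ?_ ?_ ?_ hz
  · rintro w ⟨ν, rfl⟩ i j
    exact hG ν i j
  · intro i j
    rw [Matrix.zero_apply]
    exact Submodule.zero_mem _
  · intro x y _ _ hx hy i j
    rw [Matrix.add_apply]
    exact Submodule.add_mem _ (hx i j) (hy i j)
  · intro r x _ hx i j
    rw [Matrix.smul_apply, smul_eq_mul]
    exact Ideal.mul_mem_left _ _ (hx i j)

lemma entries_smul {I : Ideal R} {Q : Submodule R Mat} {a b : ℕ}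
    (hI : I ≤ OI (K := K) (s := s) a) (hQ : ∀ w ∈ Q, ∀ i j, w i j ∈ OI b) :
    ∀ z ∈ I • Q, ∀ i j, z i j ∈ OI (a + b) := by
  intro z hz
  refine Submodule.smul_induction_on hz ?_ ?_
  · intro r hr w hw i j
    rw [Matrix.smul_apply, smul_eq_mul]
    exact mul_mem_OI (hI hr) (hQ w hw i j)
  · intro x y hx hy i j
    rw [Matrix.add_apply]
    exact Submodule.add_mem _ (hx i j) (hy i j)

lemma combo_of_smul {I J : Ideal R} {Q : Submodule R Mat} (G : Fin s → Mat)
    (hQ : ∀ w ∈ Q, ∃ Ec : Fin s → R, (∀ ν, Ec ν ∈ J) ∧ w = ∑ ν : Fin s, Ec ν • G ν) :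
    ∀ z ∈ I • Q, ∃ Ec : Fin s → R, (∀ ν, Ec ν ∈ I * J) ∧ z = ∑ ν : Fin s, Ec ν • G ν := by
  intro z hz
  refine Submodule.smul_induction_on hz ?_ ?_
  · intro r hr w hw
    obtain ⟨Ec, hEc, rfl⟩ := hQ w hw
    refine ⟨fun ν => r * Ec ν, fun ν => Ideal.mul_mem_mul hr (hEc ν), ?_⟩
    rw [Finset.smul_sum]
    exact Finset.sum_congr rfl fun ν _ => by rw [smul_smul]
  · rintro x y ⟨Ex, hEx, rfl⟩ ⟨Ey, hEy, rfl⟩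
    refine ⟨fun ν => Ex ν + Ey ν, fun ν => Submodule.add_mem _ (hEx ν) (hEy ν), ?_⟩
    rw [← Finset.sum_add_distrib]
    exact Finset.sum_congr rfl fun ν _ => (add_smul _ _ _).symm

lemma combo_of_span {G : Fin s → Mat} :
    ∀ w ∈ Submodule.span R (Set.range G),
      ∃ Ec : Fin s → R, (∀ ν, Ec ν ∈ (⊤ : Ideal R)) ∧ w = ∑ ν : Fin s, Ec ν • G ν := by
  intro w hw
  obtain ⟨c, hc⟩ := (Submodule.mem_span_range_iff_exists_fun (MvPowerSeries (Fin s) K)).mp hw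
  exact ⟨c, fun ν => Submodule.mem_top, hc.symm⟩

end FD

theorem finite_right_determinacy {K : Type*} [Field K] {s m n : ℕ}
    (A : Matrix (Fin m) (Fin n) (MvPowerSeries (Fin s) K))
    (hA : ∀ i j, A i j ∈ maximalIdeal (MvPowerSeries (Fin s) K))
    -- o = ord(A): every entry lies in m^o and some entry does not lie in m^{o+1}
    (o : ℕ) (ho : ∀ i j, A i j ∈ (maximalIdeal (MvPowerSeries (Fin s) K)) ^ o)
    (ho2 : ¬ ∀ i j, A i j ∈ (maximalIdeal (MvPowerSeries (Fin s) K)) ^ (o + 1))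
    (k : ℕ)
    (hk : matSub ((maximalIdeal (MvPowerSeries (Fin s) K)) ^ (k + 2)) ≤
      (maximalIdeal (MvPowerSeries (Fin s) K)) • TR A) :
    ∀ B : Matrix (Fin m) (Fin n) (MvPowerSeries (Fin s) K),
      (∀ i j, B i j - A i j ∈ (maximalIdeal (MvPowerSeries (Fin s) K)) ^ (2 * k + 3 - o)) →
      ∃ φ : MvPowerSeries (Fin s) K ≃ₐ[K] MvPowerSeries (Fin s) K, B = A.map φ := by
  classical
  intro B hB
  by_cases hs : s = 0
  · exfalso
    apply ho2
    intro i j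
    have hzero : A i j = 0 := by
      ext d
      have hd : FD.deg d < 1 := by
        have h0 : FD.deg d = 0 := by
          rw [FD.deg_eq_sum]
          exact Finset.sum_eq_zero fun ν _ => absurd ν.isLt (by omega)
        omega
      have hmem : A i j ∈ FD.OI (K := K) (s := s) 1 := by
        rw [← FD.maximalIdeal_eq]
        exact hA i j
      rw [map_zero]
      exact hmem d hd
    rw [hzero]
    exact Submodule.zero_mem _
  have hspos : 0 < s := Nat.pos_of_ne_zero hs
  push_neg at ho2
  obtain ⟨i0, j0, hij0⟩ := ho2
  have hoOI : ∀ i j, A i j ∈ FD.OI (K := K) (s := s) o := by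
    intro i j
    rw [← FD.maximalIdeal_pow_eq]
    exact ho i j
  have ho1 : 1 ≤ o := by
    by_contra h
    have ho0 : o = 0 := by omega
    apply hij0
    rw [ho0, pow_one]
    exact hA i0 j0
  obtain ⟨o', rfl⟩ : ∃ o', o = o' + 1 := ⟨o - 1, by omega⟩
  -- entries of m • TR A lie in OI (o' + 2)
  have hTR : ∀ z ∈ (maximalIdeal (MvPowerSeries (Fin s) K)) • TR A, ∀ i j,
      z i j ∈ FD.OI (K := K) (s := s) (o' + 2) := by
    have hspan : ∀ w ∈ Submodule.span (MvPowerSeries (Fin s) K)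
        (Set.range fun ν : Fin s => A.map (pderiv ν)), ∀ i j, w i j ∈ FD.OI (K := K) (s := s) o' := by
      refine FD.entries_span fun ν i j => ?_
      rw [Matrix.map_apply]
      exact FD.pderiv_mem_OI (hoOI i j) ν
    have h1 : ∀ z ∈ TR A, ∀ i j, z i j ∈ FD.OI (K := K) (s := s) (1 + o') :=
      FD.entries_smul (le_of_eq FD.maximalIdeal_eq) hspan
    have h2 : ∀ z ∈ (maximalIdeal (MvPowerSeries (Fin s) K)) • TR A, ∀ i j,
        z i j ∈ FD.OI (K := K) (s := s) (1 + (1 + o')) :=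
      FD.entries_smul (le_of_eq FD.maximalIdeal_eq) h1
    intro z hz i j
    exact FD.OI_mono (by omega) (h2 z hz i j)
  set ν₀ : Fin s := ⟨0, hspos⟩ with hν₀
  have hole : o' + 1 ≤ k + 1 := by
    by_contra hcon
    set Z : Matrix (Fin m) (Fin n) (MvPowerSeries (Fin s) K) :=
      fun _ _ => (MvPowerSeries.X ν₀) ^ (k + 2) with hZdef
    have hZ : Z ∈ matSub ((maximalIdeal (MvPowerSeries (Fin s) K)) ^ (k + 2)) := by
      intro i j
      refine Ideal.pow_mem_pow ?_ _
      rw [FD.maximalIdeal_eq]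
      exact FD.X_mem_OI ν₀
    have hent := hTR Z (hk hZ) i0 j0
    have hcoeff := hent (Finsupp.single ν₀ (k + 2)) (by rw [FD.deg_single]; omega)
    rw [show Z i0 j0 = (MvPowerSeries.X ν₀ : MvPowerSeries (Fin s) K) ^ (k + 2) from rfl,
      MvPowerSeries.coeff_X_pow, if_pos rfl] at hcoeff
    exact one_ne_zero hcoeff
  set u := k + 1 - (o' + 1) with hu
  have huo : (o' + 1) + u = k + 1 := by omega
  set t := u + k + 2 with ht
  have htval : 2 * k + 3 - (o' + 1) = t := by omega
  have hB' : ∀ i j, A i j - B i j ∈ FD.OI (K := K) (s := s) t := by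
    intro i j
    have h1 := hB i j
    rw [htval, FD.maximalIdeal_pow_eq] at h1
    have h2 := Submodule.neg_mem _ h1
    rwa [neg_sub] at h2
  -- the one-step improvement
  have step : ∀ (j : ℕ) (C : Matrix (Fin m) (Fin n) (MvPowerSeries (Fin s) K)),
      (∀ i j', A i j' - C i j' ∈ FD.OI (K := K) (s := s) (t + j)) →
      ∃ E : Fin s → MvPowerSeries (Fin s) K, (∀ ν, E ν ∈ FD.OI (u + j + 2)) ∧
        ∀ i j', A i j' - FD.subst (fun ν => MvPowerSeries.X ν + E ν) (C i j')
          ∈ FD.OI (t + j + 1) := by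
    intro j C hC
    have hD : (Matrix.of fun i j' => A i j' - C i j')
        ∈ matSub ((maximalIdeal (MvPowerSeries (Fin s) K)) ^ (u + j)
            * (maximalIdeal (MvPowerSeries (Fin s) K)) ^ (k + 2)) := by
      intro i j'
      rw [← pow_add, show u + j + (k + 2) = t + j by omega, FD.maximalIdeal_pow_eq]
      exact hC i j'
    have hD2 := FD.matSub_mul_le hD
    have hD3 := (Submodule.smul_mono (le_refl _) hk) hD2
    rw [TR] at hD3
    obtain ⟨E, hEmem, hEeq⟩ :=
      FD.combo_of_smul _ (FD.combo_of_smul _ (FD.combo_of_smul _ FD.combo_of_span)) _ hD3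
    have hEOI : ∀ ν, E ν ∈ FD.OI (K := K) (s := s) (u + j + 2) := by
      intro ν
      have hle : (maximalIdeal (MvPowerSeries (Fin s) K)) ^ (u + j)
          * ((maximalIdeal (MvPowerSeries (Fin s) K))
            * ((maximalIdeal (MvPowerSeries (Fin s) K)) * (⊤ : Ideal (MvPowerSeries (Fin s) K))))
          ≤ FD.OI (u + j + 2) := by
        rw [Ideal.mul_top, FD.maximalIdeal_pow_eq, FD.maximalIdeal_eq]
        calc FD.OI (K := K) (s := s) (u + j) * (FD.OI 1 * FD.OI 1)
            ≤ FD.OI (u + j) * FD.OI 2 := Ideal.mul_mono_right (FD.OI_mul_le 1 1)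
          _ ≤ FD.OI (u + j + 2) := FD.OI_mul_le _ 2
      exact hle (hEmem ν)
    have hEentry : ∀ i j', A i j' - C i j'
        = ∑ ν : Fin s, E ν * pderiv ν (A i j') := by
      intro i j'
      have h1 := congrFun (congrFun hEeq i) j'
      rw [Matrix.sum_apply] at h1
      have h2 : ∀ ν ∈ (Finset.univ : Finset (Fin s)),
          (E ν • A.map (pderiv ν)) i j' = E ν * pderiv ν (A i j') := by
        intro ν _
        simp [Matrix.smul_apply, Matrix.map_apply, smul_eq_mul]
      rw [Finset.sum_congr rfl h2] at h1
      rw [← h1, Matrix.of_apply]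
    refine ⟨E, hEOI, ?_⟩
    intro i j'
    have hCij : C i j' ∈ FD.OI (K := K) (s := s) (o' + 1) := by
      have h1 : A i j' ∈ FD.OI (K := K) (s := s) (o' + 1) := hoOI i j'
      have h2 : A i j' - C i j' ∈ FD.OI (K := K) (s := s) (o' + 1) :=
        FD.OI_mono (by omega) (hC i j')
      have h3 := Submodule.sub_mem _ h1 h2
      simpa using h3
    have htay := FD.taylor (c := u + j) (E := E) hEOI hCij
    have hkey : A i j' - FD.subst (fun ν => MvPowerSeries.X ν + E ν) (C i j')
        = (∑ ν : Fin s, E ν * pderiv ν (A i j' - C i j'))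
          - (FD.subst (fun ν => MvPowerSeries.X ν + E ν) (C i j') - C i j'
              - ∑ ν : Fin s, E ν * pderiv ν (C i j')) := by
      have hsplit : ∀ ν ∈ (Finset.univ : Finset (Fin s)),
          E ν * pderiv ν (A i j' - C i j')
          = E ν * pderiv ν (A i j') - E ν * pderiv ν (C i j') := by
        intro ν _
        rw [FD.pderiv_sub]
        ring
      rw [Finset.sum_congr rfl hsplit, Finset.sum_sub_distrib, ← hEentry i j']
      ring
    rw [hkey]
    refine Submodule.sub_mem _ ?_ (FD.OI_mono (by omega) htay)
    refine Submodule.sum_mem _ fun ν _ => ?_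
    have hpd : pderiv ν (A i j' - C i j') ∈ FD.OI (K := K) (s := s) (u + k + 1 + j) := by
      refine FD.pderiv_mem_OI ?_ ν
      have := hC i j'
      rwa [show t + j = (u + k + 1 + j) + 1 by omega] at this
    exact FD.OI_mono (by omega) (FD.mul_mem_OI (hEOI ν) hpd)
  -- iterate
  let Chain : ∀ j : ℕ, {C : Matrix (Fin m) (Fin n) (MvPowerSeries (Fin s) K) //
      ∀ i j', A i j' - C i j' ∈ FD.OI (K := K) (s := s) (t + j)} :=
    fun j => Nat.rec (motive := fun j => {C : Matrix (Fin m) (Fin n) (MvPowerSeries (Fin s) K) //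
        ∀ i j', A i j' - C i j' ∈ FD.OI (K := K) (s := s) (t + j)})
      ⟨B, fun i j' => hB' i j'⟩
      (fun j' prev =>
        ⟨(prev.1).map (FD.subst (fun ν => MvPowerSeries.X ν + (step j' prev.1 prev.2).choose ν)),
         fun i j'2 => (step j' prev.1 prev.2).choose_spec.2 i j'2⟩) j
  set E : ℕ → Fin s → MvPowerSeries (Fin s) K :=
    fun j => (step j (Chain j).1 (Chain j).2).choose with hEdef
  have hEmem : ∀ j ν, E j ν ∈ FD.OI (K := K) (s := s) (u + j + 2) :=
    fun j => (step j (Chain j).1 (Chain j).2).choose_spec.1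
  have hg1 : ∀ j ν, MvPowerSeries.X ν + E j ν ∈ FD.OI (K := K) (s := s) 1 :=
    fun j ν => Submodule.add_mem _ (FD.X_mem_OI ν) (FD.OI_mono (by omega) (hEmem j ν))
  have hChainSucc : ∀ j, (Chain (j + 1)).1
      = (Chain j).1.map (FD.subst (fun ν => MvPowerSeries.X ν + E j ν)) := fun j => rfl
  -- accumulated substitutions
  let H : ℕ → Fin s → MvPowerSeries (Fin s) K :=
    fun j => Nat.rec (motive := fun _ => Fin s → MvPowerSeries (Fin s) K)
      (fun ν => MvPowerSeries.X ν + E 0 ν)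
      (fun j' Hp => fun ν => FD.subst (fun μ => MvPowerSeries.X μ + E (j' + 1) μ) (Hp ν)) j
  have hH0 : H 0 = fun ν => MvPowerSeries.X ν + E 0 ν := rfl
  have hHsucc : ∀ j, H (j + 1)
      = fun ν => FD.subst (fun μ => MvPowerSeries.X μ + E (j + 1) μ) (H j ν) := fun j => rfl
  have hH1 : ∀ j ν, H j ν ∈ FD.OI (K := K) (s := s) 1 := by
    intro j
    induction j with
    | zero => exact fun ν => hg1 0 ν
    | succ j ih => exact fun ν => FD.subst_mem_OI (hg1 (j + 1)) (ih ν)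
  have hHC : ∀ j i j', (Chain (j + 1)).1 i j' = FD.subst (H j) (B i j') := by
    intro j
    induction j with
    | zero =>
      intro i j'
      rw [hChainSucc 0, Matrix.map_apply, hH0]
      rfl
    | succ j ih =>
      intro i j'
      rw [hChainSucc (j + 1), Matrix.map_apply, ih i j']
      have hcomp := FD.substHom_comp (hg1 (j + 1)) (hH1 j)
      have := DFunLike.congr_fun hcomp (B i j')
      rw [AlgHom.comp_apply] at this
      rw [show (FD.substHom (H j) (hH1 j)) (B i j') = FD.subst (H j) (B i j') from rfl] at this
      rw [show (FD.substHom (fun ν => MvPowerSeries.X ν + E (j + 1) ν) (hg1 (j + 1)))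
          (FD.subst (H j) (B i j'))
          = FD.subst (fun ν => MvPowerSeries.X ν + E (j + 1) ν) (FD.subst (H j) (B i j'))
          from rfl] at this
      rw [this, hHsucc j]
      rfl
  have hHdiff : ∀ j ν, H (j + 1) ν - H j ν ∈ FD.OI (K := K) (s := s) (j + 1 + 2) := by
    intro j ν
    rw [hHsucc j]
    have hdr := FD.drift (c := j + 2) (hg1 (j + 1))
      (fun μ => by
        rw [add_sub_cancel_left]
        exact FD.OI_mono (by omega) (hEmem (j + 1) μ)) (hH1 j ν)
    exact FD.OI_mono (by omega) hdr
  have hlim : ∀ ν, ∃ L, ∀ j, L - H j ν ∈ FD.OI (K := K) (s := s) (j + 2) :=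
    fun ν => FD.limOf 2 (fun j => H j ν) (fun j => hHdiff j ν)
  choose G hG using hlim
  have hG2 : ∀ ν, G ν - MvPowerSeries.X ν ∈ FD.OI (K := K) (s := s) 2 := by
    intro ν
    have h1 := hG ν 0
    have h2 : H 0 ν - MvPowerSeries.X ν ∈ FD.OI (K := K) (s := s) 2 := by
      rw [hH0]
      have : MvPowerSeries.X ν + E 0 ν - MvPowerSeries.X ν = E 0 ν := by ring
      rw [this]
      exact FD.OI_mono (by omega) (hEmem 0 ν)
    have h3 := Submodule.add_mem _ h1 h2
    rwa [sub_add_sub_cancel] at h3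
  obtain ⟨φ, hφ⟩ := FD.exists_algEquiv hG2
  have hG1 : ∀ ν, G ν ∈ FD.OI (K := K) (s := s) 1 := FD.sub_X_OI_one hG2
  have hmain : ∀ i j', FD.subst G (B i j') = A i j' := by
    intro i j'
    refine eq_of_sub_eq_zero (FD.eq_zero_of_forall_OI fun M => ?_)
    refine FD.OI_mono (show M ≤ M + 2 by omega) ?_
    have hsplit : FD.subst G (B i j') - A i j'
        = (FD.subst G (B i j') - FD.subst (H M) (B i j'))
          + ((Chain (M + 1)).1 i j' - A i j') := by
      rw [hHC M i j']
      ring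
    rw [hsplit]
    refine Submodule.add_mem _ ?_ ?_
    · exact FD.subst_congr_mem hG1 (hH1 M) (fun ν => hG ν M) (B i j')
    · have h1 := (Chain (M + 1)).2 i j'
      have h2 := Submodule.neg_mem _ h1
      rw [neg_sub] at h2
      exact FD.OI_mono (by omega) h2
  refine ⟨φ.symm, ?_⟩
  ext i j'
  rw [Matrix.map_apply]
  have hφB : φ (B i j') = A i j' := by rw [hφ, hmain]
  rw [← hφB, AlgEquiv.symm_apply_apply]

end
end

section
/- Let K be a field of characteristic 2 and R = K[[x,y]] with maximal ideal m. The power series f = x² + y³ is contact 4-determined: for every g ∈ R with g − f ∈ m⁵ there exist a unit u ∈ R and a K-algebra automorphism φ of R such that g = u·φ(f). Moreover, the contact tangent image satisfies ⟨f⟩ + m·⟨∂f/∂x, ∂f/∂y⟩ = ⟨x², xy², y³⟩ as ideals of R. -/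
/- STATEMENT 19: Let char(K) = 2 and R = K[[x,y]]. Then f = x² + y³ is contact
4-determined: every g with g − f ∈ m⁵ satisfies g = u·φ(f) for some unit u ∈ R and some
K-algebra automorphism φ of R. Moreover ⟨f⟩ + m·⟨∂f/∂x, ∂f/∂y⟩ = ⟨x², xy², y³⟩. -/

open MvPowerSeries IsLocalRing

noncomputable section

namespace CD

/-- total degree of an exponent -/
def deg (d : Fin 2 →₀ ℕ) : ℕ := d 0 + d 1

lemma deg_add (u v : Fin 2 →₀ ℕ) : deg (u + v) = deg u + deg v := by
  simp [deg, Finsupp.add_apply]; ring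

lemma deg_single (i : Fin 2) (k : ℕ) : deg (Finsupp.single i k) = k := by
  fin_cases i <;> simp [deg, Finsupp.single_apply]

lemma deg_eq_zero {d : Fin 2 →₀ ℕ} (h : deg d = 0) : d = 0 := by
  simp only [deg] at h
  ext a
  revert a; rw [Fin.forall_fin_two]
  constructor <;> simp <;> omega

lemma fin2_decomp (d : Fin 2 →₀ ℕ) : d = Finsupp.single 0 (d 0) + Finsupp.single 1 (d 1) := by
  ext a
  revert a; rw [Fin.forall_fin_two]
  simp [Finsupp.add_apply, Finsupp.single_apply]

lemma deg_sum (d : Fin 2 →₀ ℕ) : (d.sum fun _ n => n) = deg d := by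
  rw [Finsupp.sum_fintype]
  · exact Fin.sum_univ_two _
  · intro _; rfl

variable {K : Type*} [Field K]

/-- coefficient-vanishing auxiliary lemma for products -/
lemma coeff_mul_vanish {m n : ℕ} {f g : MvPowerSeries (Fin 2) K}
    (hf : ∀ d, deg d < m → MvPowerSeries.coeff d f = 0)
    (hg : ∀ d, deg d < n → MvPowerSeries.coeff d g = 0)
    (d : Fin 2 →₀ ℕ) (hd : deg d < m + n) :
    MvPowerSeries.coeff d (f * g) = 0 := by
  classical
  rw [MvPowerSeries.coeff_mul]
  apply Finset.sum_eq_zero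
  rintro ⟨u, v⟩ huv
  replace huv : u + v = d := by simpa using huv
  have hdeg : deg u + deg v = deg d := by rw [← deg_add, huv]
  rcases lt_or_ge (deg u) m with h | h
  · rw [hf u h, zero_mul]
  · rw [hg v (by omega), mul_zero]

/-- the ideal of power series of order ≥ n -/
def J (K : Type*) [Field K] (n : ℕ) : Ideal (MvPowerSeries (Fin 2) K) where
  carrier := {f | ∀ d, deg d < n → MvPowerSeries.coeff d f = 0}
  add_mem' := by intro a b ha hb d hd; simp [map_add, ha d hd, hb d hd]
  zero_mem' := by intro d _; simp
  smul_mem' := by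
    intro r f hf d hd
    have h0 : ∀ e : Fin 2 →₀ ℕ, deg e < 0 → MvPowerSeries.coeff e r = 0 := by
      intro e he; omega
    have := coeff_mul_vanish h0 hf d (by omega)
    simpa using this

lemma mem_J_iff {n : ℕ} {f : MvPowerSeries (Fin 2) K} :
    f ∈ J K n ↔ ∀ d, deg d < n → MvPowerSeries.coeff d f = 0 := Iff.rfl

lemma J_le {m n : ℕ} (h : m ≤ n) : J K n ≤ J K m := by
  intro f hf d hd; exact hf d (by omega)

lemma J_zero : J K 0 = ⊤ := by
  ext f; simp [mem_J_iff]

lemma mul_mem_J {m n : ℕ} {f g : MvPowerSeries (Fin 2) K}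
    (hf : f ∈ J K m) (hg : g ∈ J K n) : f * g ∈ J K (m + n) :=
  fun d hd => coeff_mul_vanish hf hg d hd

lemma pow_mem_J {n : ℕ} {f : MvPowerSeries (Fin 2) K} (hf : f ∈ J K n) (k : ℕ) :
    f ^ k ∈ J K (n * k) := by
  induction k with
  | zero => simp [J_zero]
  | succ m ih =>
    rw [pow_succ]
    have := mul_mem_J ih hf
    exact J_le (by ring_nf; omega) this

lemma monomial_mem_J (e : Fin 2 →₀ ℕ) (a : K) :
    (MvPowerSeries.monomial e a) ∈ J K (deg e) := by
  intro d hd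
  rw [MvPowerSeries.coeff_monomial]
  split
  · next h => subst h; omega
  · rfl

lemma X_mem_J (i : Fin 2) : (MvPowerSeries.X i : MvPowerSeries (Fin 2) K) ∈ J K 1 := by
  have := monomial_mem_J (K := K) (Finsupp.single i 1) (1 : K)
  rw [deg_single] at this
  exact this

lemma X_pow_mem_J (i : Fin 2) (k : ℕ) :
    (MvPowerSeries.X i ^ k : MvPowerSeries (Fin 2) K) ∈ J K k := by
  induction k with
  | zero => simp [J_zero]
  | succ n ih =>
    rw [pow_succ]
    exact mul_mem_J ih (X_mem_J i)

lemma eq_zero_of_forall_mem_J {f : MvPowerSeries (Fin 2) K} (h : ∀ n, f ∈ J K n) : f = 0 := by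
  ext d
  simpa using h (deg d + 1) d (by omega)

lemma maximalIdeal_le_J1 : maximalIdeal (MvPowerSeries (Fin 2) K) ≤ J K 1 := by
  intro f hf d hd
  have h0 : d = 0 := deg_eq_zero (by omega)
  subst h0
  rw [mem_maximalIdeal, mem_nonunits_iff, MvPowerSeries.isUnit_iff_constantCoeff] at hf
  rw [isUnit_iff_ne_zero, not_not] at hf
  simpa [MvPowerSeries.coeff_zero_eq_constantCoeff] using hf

lemma maximalIdeal_pow_le_J (k : ℕ) :
    (maximalIdeal (MvPowerSeries (Fin 2) K)) ^ k ≤ J K k := by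
  induction k with
  | zero => simp [J_zero]
  | succ n ih =>
    rw [pow_succ]
    refine Ideal.mul_le.2 fun r hr s hs => ?_
    exact mul_mem_J (ih hr) (maximalIdeal_le_J1 hs)

/-- limit of coefficientwise-stabilizing sequences -/
lemma exists_limit (s : ℕ → MvPowerSeries (Fin 2) K)
    (hs : ∀ n m, n ≤ m → s m - s n ∈ J K n) :
    ∃ t : MvPowerSeries (Fin 2) K, (∀ n, t - s n ∈ J K n) ∧
      (∀ k, (∀ n, s n ∈ J K k) → t ∈ J K k) := by
  refine ⟨fun d => MvPowerSeries.coeff d (s (deg d + 1)), ?_, ?_⟩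
  · intro n d hd
    have key : MvPowerSeries.coeff d (s (deg d + 1)) = MvPowerSeries.coeff d (s n) := by
      rcases le_total n (deg d + 1) with h | h
      · have h2 := hs n (deg d + 1) h d hd
        rw [map_sub, sub_eq_zero] at h2
        exact h2
      · have h2 := hs (deg d + 1) n h d (by omega)
        rw [map_sub, sub_eq_zero] at h2
        exact h2.symm
    show MvPowerSeries.coeff d ((fun d => MvPowerSeries.coeff d (s (deg d + 1))) :
      MvPowerSeries (Fin 2) K) - MvPowerSeries.coeff d (s n) = 0
    have : MvPowerSeries.coeff d
        ((fun d => MvPowerSeries.coeff d (s (deg d + 1))) : MvPowerSeries (Fin 2) K) =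
        MvPowerSeries.coeff d (s (deg d + 1)) := rfl
    rw [this, key, sub_self]
  · intro k hk d hd
    exact hk (deg d + 1) d hd

/-! ### Truncation -/

def expSet (N : ℕ) : Finset (Fin 2 →₀ ℕ) :=
  ((Finset.range N ×ˢ Finset.range N).image
    fun p => Finsupp.single 0 p.1 + Finsupp.single 1 p.2).filter fun e => deg e < N

lemma mem_expSet {N : ℕ} {e : Fin 2 →₀ ℕ} : e ∈ expSet N ↔ deg e < N := by
  constructor
  · intro h; exact (Finset.mem_filter.mp h).2
  · intro h
    refine Finset.mem_filter.mpr ⟨Finset.mem_image.mpr ⟨(e 0, e 1), ?_, (fin2_decomp e).symm⟩, h⟩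
    simp only [Finset.mem_product, Finset.mem_range]
    have : deg e = e 0 + e 1 := rfl
    omega

variable {K : Type*} [Field K]

/-- truncation keeping total degree `< N` -/
def T (N : ℕ) (f : MvPowerSeries (Fin 2) K) : MvPolynomial (Fin 2) K :=
  ∑ e ∈ expSet N, MvPolynomial.monomial e (MvPowerSeries.coeff e f)

lemma coeff_T (N : ℕ) (f : MvPowerSeries (Fin 2) K) (e : Fin 2 →₀ ℕ) :
    MvPolynomial.coeff e (T N f) = if deg e < N then MvPowerSeries.coeff e f else 0 := by
  classical
  rw [T, MvPolynomial.coeff_sum]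
  simp only [MvPolynomial.coeff_monomial]
  rw [Finset.sum_ite_eq' (expSet N) e (fun e' => MvPowerSeries.coeff e' f)]
  simp [mem_expSet]

lemma support_T {N : ℕ} {f : MvPowerSeries (Fin 2) K} {e : Fin 2 →₀ ℕ}
    (he : e ∈ (T N f).support) : deg e < N := by
  by_contra h
  rw [MvPolynomial.mem_support_iff, coeff_T, if_neg h] at he
  exact he rfl

lemma T_sub_mem (N : ℕ) (f : MvPowerSeries (Fin 2) K) :
    f - ↑(T N f) ∈ J K N := by
  intro d hd
  rw [map_sub, MvPolynomial.coeff_coe, coeff_T, if_pos hd, sub_self]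

lemma T_coe {N : ℕ} (p : MvPolynomial (Fin 2) K) (hp : ∀ e ∈ p.support, deg e < N) :
    T N (↑p : MvPowerSeries (Fin 2) K) = p := by
  apply MvPolynomial.ext
  intro e
  rw [coeff_T, MvPolynomial.coeff_coe]
  split
  · rfl
  · next h =>
    by_contra hne
    exact h (hp e (MvPolynomial.mem_support_iff.mpr fun hc => hne hc.symm))

lemma T_add (N : ℕ) (f g : MvPowerSeries (Fin 2) K) : T N (f + g) = T N f + T N g := by
  apply MvPolynomial.ext
  intro e
  rw [MvPolynomial.coeff_add, coeff_T, coeff_T, coeff_T, map_add]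
  split <;> simp

/-! ### The substitution homomorphism -/

section Subst

variable (b : MvPowerSeries (Fin 2) K)

/-- images of the variables -/
def sg : Fin 2 → MvPowerSeries (Fin 2) K := ![MvPowerSeries.X 0, MvPowerSeries.X 1 + b]

/-- substitution on polynomials -/
def Φ : MvPolynomial (Fin 2) K →ₐ[K] MvPowerSeries (Fin 2) K := MvPolynomial.aeval (sg b)

lemma Phi_monomial (e : Fin 2 →₀ ℕ) (a : K) :
    Φ b (MvPolynomial.monomial e a) =
      MvPowerSeries.C (σ := Fin 2) (R := K) a * (MvPowerSeries.X 0 ^ (e 0) *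
        (MvPowerSeries.X 1 + b) ^ (e 1)) := by
  rw [Φ, MvPolynomial.aeval_monomial, ← MvPowerSeries.c_eq_algebraMap]
  congr 1
  rw [Finsupp.prod_fintype]
  · rw [Fin.prod_univ_two]
    simp [sg]
  · intro i; exact pow_zero _

variable {b}

lemma sgX1_mem (hb : b ∈ J K 2) : MvPowerSeries.X 1 + b ∈ J K 1 :=
  add_mem (X_mem_J 1) (J_le (by omega) hb)

lemma pow_mem_J1 {f : MvPowerSeries (Fin 2) K} (hf : f ∈ J K 1) (k : ℕ) : f ^ k ∈ J K k := by
  induction k with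
  | zero => simp [J_zero]
  | succ n ih => rw [pow_succ]; exact mul_mem_J ih hf

lemma Phi_monomial_mem (hb : b ∈ J K 2) (e : Fin 2 →₀ ℕ) (a : K) :
    Φ b (MvPolynomial.monomial e a) ∈ J K (deg e) := by
  rw [Phi_monomial]
  apply Ideal.mul_mem_left
  have : deg e = e 0 + e 1 := rfl
  rw [this]
  exact mul_mem_J (pow_mem_J1 (X_mem_J 0) _) (pow_mem_J1 (sgX1_mem hb) _)

lemma Phi_poly_mem (hb : b ∈ J K 2) (p : MvPolynomial (Fin 2) K) (N : ℕ)
    (hp : ∀ e ∈ p.support, N ≤ deg e) : Φ b p ∈ J K N := by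
  have hps : Φ b p = ∑ e ∈ p.support, Φ b (MvPolynomial.monomial e (MvPolynomial.coeff e p)) := by
    conv_lhs => rw [p.as_sum]
    rw [map_sum]
  rw [hps]
  exact Ideal.sum_mem _ fun e he => J_le (hp e he) (Phi_monomial_mem hb e _)

lemma bpow_mem (hb : b ∈ J K 2) (k : ℕ) :
    (MvPowerSeries.X 1 + b) ^ k - MvPowerSeries.X 1 ^ k ∈ J K (k + 1) := by
  induction k with
  | zero => simp
  | succ n ih =>
    have key : (MvPowerSeries.X 1 + b) ^ (n+1) - MvPowerSeries.X 1 ^ (n+1) =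
        ((MvPowerSeries.X 1 + b) ^ n - MvPowerSeries.X 1 ^ n) * (MvPowerSeries.X 1 + b)
          + MvPowerSeries.X 1 ^ n * b := by ring
    rw [key]
    refine add_mem (J_le (by omega) (mul_mem_J ih (sgX1_mem hb))) ?_
    exact J_le (by omega) (mul_mem_J (X_pow_mem_J 1 n) hb)

lemma mon_factor (e : Fin 2 →₀ ℕ) (a : K) :
    (MvPowerSeries.monomial e a : MvPowerSeries (Fin 2) K) =
      MvPowerSeries.C (σ := Fin 2) (R := K) a * MvPowerSeries.X 0 ^ (e 0) * MvPowerSeries.X 1 ^ (e 1) := by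
  rw [MvPowerSeries.X_pow_eq, MvPowerSeries.X_pow_eq]
  have hC : (MvPowerSeries.C (σ := Fin 2) (R := K) a) = MvPowerSeries.monomial 0 a := rfl
  rw [hC, MvPowerSeries.monomial_mul_monomial, MvPowerSeries.monomial_mul_monomial]
  rw [mul_one, mul_one, zero_add, ← fin2_decomp]

lemma Phi_monomial_sub (hb : b ∈ J K 2) (e : Fin 2 →₀ ℕ) (a : K) :
    Φ b (MvPolynomial.monomial e a) - ↑(MvPolynomial.monomial e a) ∈ J K (deg e + 1) := by
  have hco : (↑(MvPolynomial.monomial e a) : MvPowerSeries (Fin 2) K)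
      = MvPowerSeries.monomial e a := MvPolynomial.coe_monomial e a
  rw [Phi_monomial, hco, mon_factor]
  have key : MvPowerSeries.C (σ := Fin 2) (R := K) a * (MvPowerSeries.X 0 ^ (e 0) *
        (MvPowerSeries.X 1 + b) ^ (e 1)) -
      MvPowerSeries.C (σ := Fin 2) (R := K) a * MvPowerSeries.X 0 ^ (e 0) * MvPowerSeries.X 1 ^ (e 1) =
      MvPowerSeries.C (σ := Fin 2) (R := K) a * (MvPowerSeries.X 0 ^ (e 0) *
        ((MvPowerSeries.X 1 + b) ^ (e 1) - MvPowerSeries.X 1 ^ (e 1))) := by ring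
  rw [key]
  apply Ideal.mul_mem_left
  have := mul_mem_J (X_pow_mem_J (K := K) 0 (e 0)) (bpow_mem hb (e 1))
  exact J_le (by have : deg e = e 0 + e 1 := rfl; omega) this

lemma Phi_poly_sub (hb : b ∈ J K 2) (p : MvPolynomial (Fin 2) K) (N : ℕ)
    (hp : ∀ e ∈ p.support, N ≤ deg e) :
    Φ b p - ↑p ∈ J K (N + 1) := by
  have key : Φ b p - ↑p = ∑ e ∈ p.support,
      (Φ b (MvPolynomial.monomial e (MvPolynomial.coeff e p)) -
        ↑(MvPolynomial.monomial e (MvPolynomial.coeff e p))) := by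
    rw [Finset.sum_sub_distrib, ← map_sum]
    have h2 : (↑p : MvPowerSeries (Fin 2) K) = ∑ e ∈ p.support,
        (↑(MvPolynomial.monomial e (MvPolynomial.coeff e p)) : MvPowerSeries (Fin 2) K) := by
      conv_lhs => rw [p.as_sum]
      simp only [← MvPolynomial.coeToMvPowerSeries.ringHom_apply, map_sum]
    rw [← h2]
    congr 1
    conv_lhs => rw [p.as_sum]
  rw [key]
  exact Ideal.sum_mem _ fun e he => J_le (by have := hp e he; omega) (Phi_monomial_sub hb e _)

variable (b)

/-- the substitution endomorphism, as a bare function -/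
def Ssub (f : MvPowerSeries (Fin 2) K) : MvPowerSeries (Fin 2) K :=
  fun d => MvPowerSeries.coeff d (Φ b (T (deg d + 1) f))

lemma coeff_Ssub (f : MvPowerSeries (Fin 2) K) (d : Fin 2 →₀ ℕ) :
    MvPowerSeries.coeff d (Ssub b f) =
      MvPowerSeries.coeff d (Φ b (T (deg d + 1) f)) := rfl

lemma S_spec (hb : b ∈ J K 2) (f : MvPowerSeries (Fin 2) K) (d : Fin 2 →₀ ℕ) (N : ℕ)
    (h : deg d < N) :
    MvPowerSeries.coeff d (Ssub b f) = MvPowerSeries.coeff d (Φ b (T N f)) := by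
  rw [coeff_Ssub]
  have hsupp : ∀ e ∈ (T N f - T (deg d + 1) f).support, deg d + 1 ≤ deg e := by
    intro e he
    rw [MvPolynomial.mem_support_iff, MvPolynomial.coeff_sub, coeff_T, coeff_T] at he
    by_contra hc
    push_neg at hc
    rw [if_pos (by omega), if_pos (by omega), sub_self] at he
    exact he rfl
  have hmem := Phi_poly_mem hb _ _ hsupp
  have h0 := hmem d (by omega)
  rw [map_sub, map_sub] at h0
  exact (sub_eq_zero.mp h0).symm

lemma S_sub_Phi_mem (hb : b ∈ J K 2) (f : MvPowerSeries (Fin 2) K) (N : ℕ) :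
    Ssub b f - Φ b (T N f) ∈ J K N := by
  intro d hd
  rw [map_sub, S_spec b hb f d N hd, sub_self]

lemma S_add (hb : b ∈ J K 2) (f g : MvPowerSeries (Fin 2) K) :
    Ssub b (f + g) = Ssub b f + Ssub b g := by
  ext d
  rw [map_add, coeff_Ssub, coeff_Ssub, coeff_Ssub, T_add, map_add, map_add]

lemma S_coe (hb : b ∈ J K 2) (p : MvPolynomial (Fin 2) K) :
    Ssub b (↑p : MvPowerSeries (Fin 2) K) = Φ b p := by
  ext d
  set N := max (deg d + 1) (p.totalDegree + 1) with hN
  rw [S_spec b hb _ d N (by omega)]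
  rw [T_coe p fun e he => ?_]
  have h1 : deg e ≤ p.totalDegree := by
    rw [← deg_sum]
    exact MvPolynomial.le_totalDegree he
  omega

lemma S_mul (hb : b ∈ J K 2) (f g : MvPowerSeries (Fin 2) K) :
    Ssub b (f * g) = Ssub b f * Ssub b g := by
  ext d
  set N := deg d + 1 with hN
  have h1 : Ssub b (f * g) - Φ b (T N (f * g)) ∈ J K N := S_sub_Phi_mem b hb _ N
  -- middle discrepancy
  set q : MvPolynomial (Fin 2) K := T N (f * g) - T N f * T N g with hq
  have hcoe : (↑q : MvPowerSeries (Fin 2) K) =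
      -(f * g - ↑(T N (f * g))) + ((f - ↑(T N f)) * g + (↑(T N f) : MvPowerSeries (Fin 2) K) * (g - ↑(T N g))) := by
    simp only [hq, ← MvPolynomial.coeToMvPowerSeries.ringHom_apply, map_sub, map_mul]
    ring
  have hcoemem : (↑q : MvPowerSeries (Fin 2) K) ∈ J K N := by
    rw [hcoe]
    exact add_mem (neg_mem (T_sub_mem N (f * g)))
      (add_mem (Ideal.mul_mem_right _ _ (T_sub_mem N f)) (Ideal.mul_mem_left _ _ (T_sub_mem N g)))
  have hqsupp : ∀ e ∈ q.support, N ≤ deg e := by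
    intro e he
    by_contra hc
    push_neg at hc
    have := hcoemem e hc
    rw [MvPolynomial.coeff_coe] at this
    exact (MvPolynomial.mem_support_iff.mp he) this
  have h2 : Φ b (T N (f * g)) - Φ b (T N f) * Φ b (T N g) ∈ J K N := by
    have : Φ b (T N (f * g)) - Φ b (T N f) * Φ b (T N g) = Φ b q := by
      rw [hq, map_sub, map_mul]
    rw [this]
    exact Phi_poly_mem hb q N hqsupp
  have h3 : Φ b (T N f) * Φ b (T N g) - Ssub b f * Ssub b g ∈ J K N := by
    have : Φ b (T N f) * Φ b (T N g) - Ssub b f * Ssub b g =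
        -((Ssub b f - Φ b (T N f)) * Ssub b g) +
          -(Φ b (T N f) * (Ssub b g - Φ b (T N g))) := by ring
    rw [this]
    exact add_mem (neg_mem (Ideal.mul_mem_right _ _ (S_sub_Phi_mem b hb f N)))
      (neg_mem (Ideal.mul_mem_left _ _ (S_sub_Phi_mem b hb g N)))
  have htot : Ssub b (f * g) - Ssub b f * Ssub b g ∈ J K N := by
    have heq : Ssub b (f * g) - Ssub b f * Ssub b g =
        (Ssub b (f * g) - Φ b (T N (f * g))) +
        ((Φ b (T N (f * g)) - Φ b (T N f) * Φ b (T N g)) +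
         (Φ b (T N f) * Φ b (T N g) - Ssub b f * Ssub b g)) := by ring
    rw [heq]
    exact add_mem h1 (add_mem h2 h3)
  have := htot d (by omega)
  rw [map_sub] at this
  exact sub_eq_zero.mp this

lemma S_X0 (hb : b ∈ J K 2) : Ssub b (MvPowerSeries.X 0) = MvPowerSeries.X 0 := by
  rw [← MvPolynomial.coe_X, S_coe b hb, Φ, MvPolynomial.aeval_X]
  simp [sg]

lemma S_X1 (hb : b ∈ J K 2) : Ssub b (MvPowerSeries.X 1) = MvPowerSeries.X 1 + b := by
  rw [← MvPolynomial.coe_X, S_coe b hb, Φ, MvPolynomial.aeval_X]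
  simp [sg]

lemma S_one (hb : b ∈ J K 2) : Ssub b 1 = 1 := by
  have h1 : (1 : MvPowerSeries (Fin 2) K) = ↑(1 : MvPolynomial (Fin 2) K) :=
    MvPolynomial.coe_one.symm
  rw [h1, S_coe b hb, map_one]
  exact h1

lemma S_zero (hb : b ∈ J K 2) : Ssub b 0 = 0 := by
  have h1 : (0 : MvPowerSeries (Fin 2) K) = ↑(0 : MvPolynomial (Fin 2) K) :=
    MvPolynomial.coe_zero.symm
  rw [h1, S_coe b hb, map_zero]
  exact h1

lemma S_algebraMap (hb : b ∈ J K 2) (a : K) :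
    Ssub b (algebraMap K (MvPowerSeries (Fin 2) K) a) = algebraMap K (MvPowerSeries (Fin 2) K) a := by
  have h1 : algebraMap K (MvPowerSeries (Fin 2) K) a = ↑(MvPolynomial.C a : MvPolynomial (Fin 2) K) := by
    rw [MvPolynomial.coe_C, MvPowerSeries.c_eq_algebraMap]
  rw [h1, S_coe b hb, Φ, MvPolynomial.aeval_C, h1]

/-- the substitution algebra endomorphism -/
def SA (hb : b ∈ J K 2) : MvPowerSeries (Fin 2) K →ₐ[K] MvPowerSeries (Fin 2) K where
  toFun := Ssub b
  map_one' := S_one b hb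
  map_mul' := S_mul b hb
  map_zero' := S_zero b hb
  map_add' := S_add b hb
  commutes' := S_algebraMap b hb

lemma SA_apply (hb : b ∈ J K 2) (f : MvPowerSeries (Fin 2) K) : SA b hb f = Ssub b f := rfl

lemma S_sub_self_mem (hb : b ∈ J K 2) {n : ℕ} {f : MvPowerSeries (Fin 2) K} (hf : f ∈ J K n) :
    Ssub b f - f ∈ J K (n + 1) := by
  intro d hd
  set N := deg d + 1 with hN
  have hsplit : Ssub b f - f =
      (Ssub b f - Φ b (T N f)) + ((Φ b (T N f) - ↑(T N f)) + ((↑(T N f) : MvPowerSeries (Fin 2) K) - f)) := by ring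
  have m1 : Ssub b f - Φ b (T N f) ∈ J K N := S_sub_Phi_mem b hb f N
  have m2 : Φ b (T N f) - ↑(T N f) ∈ J K (n + 1) := by
    apply Phi_poly_sub hb
    intro e he
    have h := MvPolynomial.mem_support_iff.mp he
    rw [coeff_T] at h
    by_contra hc
    push_neg at hc
    apply h
    split
    · exact hf e hc
    · rfl
  have m3 : (↑(T N f) : MvPowerSeries (Fin 2) K) - f ∈ J K N := by
    have := neg_mem (T_sub_mem N f)
    simpa using this
  rw [hsplit, map_add, map_add, m1 d (by omega), m2 d hd, m3 d (by omega)]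
  simp

lemma S_mem (hb : b ∈ J K 2) {n : ℕ} {f : MvPowerSeries (Fin 2) K} (hf : f ∈ J K n) :
    Ssub b f ∈ J K n := by
  have h1 : Ssub b f = (Ssub b f - f) + f := by ring
  rw [h1]
  exact add_mem (J_le (by omega) (S_sub_self_mem b hb hf)) hf

lemma S_injective (hb : b ∈ J K 2) : Function.Injective (SA b hb) := by
  classical
  have hker : ∀ f : MvPowerSeries (Fin 2) K, SA b hb f = 0 → f = 0 := by
    intro f hf0
    by_contra hne
    have hex : ∃ k, f ∉ J K k := by
      have : ∃ d, MvPowerSeries.coeff d f ≠ 0 := by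
        by_contra hc
        push_neg at hc
        exact hne (MvPowerSeries.ext fun d => by rw [hc d, map_zero])
      obtain ⟨d, hd⟩ := this
      exact ⟨deg d + 1, fun hmem => hd (hmem d (by omega))⟩
    set k := Nat.find hex with hk
    have hks : f ∉ J K k := Nat.find_spec hex
    have hk0 : k ≠ 0 := by
      intro h0
      apply hks
      rw [h0, J_zero]
      trivial
    obtain ⟨m, hm⟩ := Nat.exists_eq_succ_of_ne_zero hk0
    have hfm : f ∈ J K m := by
      by_contra hc
      have : Nat.find hex ≤ m := Nat.find_le hc
      omega
    have hsub : Ssub b f - f ∈ J K (m + 1) := S_sub_self_mem b hb hfm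
    apply hks
    rw [hm]
    have : f = -(Ssub b f - f) := by
      rw [SA_apply] at hf0
      rw [hf0]
      ring
    rw [this]
    exact neg_mem hsub
  intro x y hxy
  have : SA b hb (x - y) = 0 := by rw [map_sub, hxy, sub_self]
  exact sub_eq_zero.mp (hker _ this)

lemma S_surjective (hb : b ∈ J K 2) : Function.Surjective (SA b hb) := by
  intro g
  -- successive approximation
  set s : ℕ → MvPowerSeries (Fin 2) K :=
    fun n => Nat.rec 0 (fun _ sn => sn + (g - Ssub b sn)) n with hs
  have hs0 : s 0 = 0 := rfl
  have hsucc : ∀ n, s (n + 1) = s n + (g - Ssub b (s n)) := fun n => rfl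
  have hres : ∀ n, g - Ssub b (s n) ∈ J K n := by
    intro n
    induction n with
    | zero => rw [J_zero]; trivial
    | succ m ih =>
      have key : g - Ssub b (s (m + 1)) = -(Ssub b (g - Ssub b (s m)) - (g - Ssub b (s m))) := by
        rw [hsucc m]
        have hadd : Ssub b (s m + (g - Ssub b (s m))) =
            Ssub b (s m) + Ssub b (g - Ssub b (s m)) := S_add b hb _ _
        rw [hadd]
        ring
      rw [key]
      exact neg_mem (S_sub_self_mem b hb ih)
  have hcauchy : ∀ n m, n ≤ m → s m - s n ∈ J K n := by
    intro n m hnm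
    induction m with
    | zero =>
      have : n = 0 := by omega
      subst this
      rw [J_zero]; trivial
    | succ k ih =>
      rcases Nat.lt_or_ge n (k+1) with h | h
      · have h1 := ih (by omega)
        have h2 : s (k+1) - s n = (s (k+1) - s k) + (s k - s n) := by ring
        rw [h2]
        refine add_mem ?_ h1
        rw [hsucc k]
        have : s k + (g - Ssub b (s k)) - s k = g - Ssub b (s k) := by ring
        rw [this]
        exact J_le (by omega) (hres k)
      · have : n = k + 1 := by omega
        subst this
        simpa using (J K (k+1)).zero_mem
  obtain ⟨t, ht, -⟩ := exists_limit s hcauchy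
  refine ⟨t, ?_⟩
  rw [SA_apply]
  have hzero : ∀ n, Ssub b t - g ∈ J K n := by
    intro n
    have h1 : Ssub b t - Ssub b (s n) ∈ J K n := by
      have : Ssub b t - Ssub b (s n) = Ssub b (t - s n) := by
        have := S_add b hb (t - s n) (s n)
        rw [show t - s n + s n = t by ring] at this
        rw [this]; ring
      rw [this]
      exact S_mem b hb (ht n)
    have h2 : Ssub b (s n) - g ∈ J K n := by
      have := neg_mem (hres n); simpa using this
    have h3 : Ssub b t - g = (Ssub b t - Ssub b (s n)) + (Ssub b (s n) - g) := by ring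
    rw [h3]
    exact add_mem h1 h2
  exact sub_eq_zero.mp (eq_zero_of_forall_mem_J fun n => hzero n)

/-- the substitution algebra automorphism `x ↦ x`, `y ↦ y + b` -/
def SE (hb : b ∈ J K 2) : MvPowerSeries (Fin 2) K ≃ₐ[K] MvPowerSeries (Fin 2) K :=
  AlgEquiv.ofBijective (SA b hb) ⟨S_injective b hb, S_surjective b hb⟩

lemma SE_apply (hb : b ∈ J K 2) (f : MvPowerSeries (Fin 2) K) : SE b hb f = Ssub b f := rfl

lemma SE_f0 (hb : b ∈ J K 2) :
    SE b hb (MvPowerSeries.X 0 ^ 2 + MvPowerSeries.X 1 ^ 3) =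
      MvPowerSeries.X 0 ^ 2 + (MvPowerSeries.X 1 + b) ^ 3 := by
  have : SE b hb (MvPowerSeries.X 0 ^ 2 + MvPowerSeries.X 1 ^ 3) =
      SE b hb (MvPowerSeries.X 0) ^ 2 + SE b hb (MvPowerSeries.X 1) ^ 3 := by
    rw [map_add, map_pow, map_pow]
  rw [this, SE_apply, SE_apply, S_X0 b hb, S_X1 b hb]

end Subst

/-! ### Division / splitting in characteristic two -/

section Solve

variable {K : Type*} [Field K]

local notation "RR" => MvPowerSeries (Fin 2) K
local notation "Y" => (MvPowerSeries.X 1 : MvPowerSeries (Fin 2) K)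
local notation "Xv" => (MvPowerSeries.X 0 : MvPowerSeries (Fin 2) K)

/-- `f₀ = x² + y³` -/
def f0 : MvPowerSeries (Fin 2) K := MvPowerSeries.X 0 ^ 2 + MvPowerSeries.X 1 ^ 3

/-- quotient of division by x² -/
def Bf (h : RR) : RR := fun d => MvPowerSeries.coeff (d + Finsupp.single 0 2) h

/-- quotient of remaining part by y² -/
def Af (h : RR) : RR := fun d =>
  if d 0 ≤ 1 then MvPowerSeries.coeff (d + Finsupp.single 1 2) h else 0

lemma coeff_Bf (h : RR) (d : Fin 2 →₀ ℕ) :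
    MvPowerSeries.coeff d (Bf h) = MvPowerSeries.coeff (d + Finsupp.single 0 2) h := rfl

lemma coeff_Af (h : RR) (d : Fin 2 →₀ ℕ) :
    MvPowerSeries.coeff d (Af h) =
      if d 0 ≤ 1 then MvPowerSeries.coeff (d + Finsupp.single 1 2) h else 0 := rfl

lemma Bf_mem {k : ℕ} {h : RR} (hh : h ∈ J K (k + 2)) : Bf h ∈ J K k := by
  intro d hd
  rw [coeff_Bf]
  exact hh _ (by rw [deg_add, deg_single]; omega)

lemma Af_mem {k : ℕ} {h : RR} (hh : h ∈ J K (k + 2)) : Af h ∈ J K k := by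
  intro d hd
  rw [coeff_Af]
  split
  · exact hh _ (by rw [deg_add, deg_single]; omega)
  · rfl

lemma coeff_X_pow_mul (i : Fin 2) (k : ℕ) (g : RR) (d : Fin 2 →₀ ℕ) :
    MvPowerSeries.coeff d (MvPowerSeries.X i ^ k * g) =
      if Finsupp.single i k ≤ d then MvPowerSeries.coeff (d - Finsupp.single i k) g else 0 := by
  rw [MvPowerSeries.X_pow_eq, MvPowerSeries.coeff_monomial_mul]
  split <;> simp

lemma split_eq {h : RR} (hh : h ∈ J K 5) :
    h = Xv ^ 2 * Bf h + Y ^ 2 * Af h := by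
  ext d
  rw [map_add, coeff_X_pow_mul, coeff_X_pow_mul]
  have hs0 : Finsupp.single (0 : Fin 2) 2 ≤ d ↔ 2 ≤ d 0 := Finsupp.single_le_iff
  have hs1 : Finsupp.single (1 : Fin 2) 2 ≤ d ↔ 2 ≤ d 1 := Finsupp.single_le_iff
  by_cases h0 : 2 ≤ d 0
  · rw [if_pos (hs0.mpr h0), coeff_Bf, tsub_add_cancel_of_le (hs0.mpr h0)]
    have hA : (if Finsupp.single (1:Fin 2) 2 ≤ d
        then MvPowerSeries.coeff (d - Finsupp.single 1 2) (Af h) else 0) = 0 := by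
      split
      · rw [coeff_Af]
        rw [if_neg]
        rw [Finsupp.tsub_apply]
        simp [Finsupp.single_apply]
        omega
      · rfl
    rw [hA, add_zero]
  · rw [if_neg (fun hc => h0 (hs0.mp hc)), zero_add]
    by_cases h1 : 2 ≤ d 1
    · rw [if_pos (hs1.mpr h1), coeff_Af]
      rw [if_pos (by rw [Finsupp.tsub_apply]; simp [Finsupp.single_apply]; omega)]
      rw [tsub_add_cancel_of_le (hs1.mpr h1)]
    · rw [if_neg (fun hc => h1 (hs1.mp hc))]
      have : deg d < 5 := by
        have : deg d = d 0 + d 1 := rfl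
        omega
      rw [hh d this]

lemma split_f_eq (h2 : (2 : RR) = 0) {h : RR} (hh : h ∈ J K 5) :
    h = Bf h * f0 + (Y * Bf h + Af h) * Y ^ 2 := by
  have heq := split_eq hh
  rw [f0]
  linear_combination heq - Bf h * (MvPowerSeries.X 1 : RR) ^ 3 * h2

lemma cube_identity (h2 : (2 : RR) = 0) (z w : RR) :
    (z + w) ^ 3 = z ^ 3 + z ^ 2 * w + z * w ^ 2 + w ^ 3 := by
  linear_combination (z ^ 2 * w + z * w ^ 2) * h2

/-! ### The iteration -/

/-- the residual of an approximate contact equivalence -/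
def resid (h : RR) (bc : RR × RR) : RR :=
  f0 + h - (1 + bc.2) * (MvPowerSeries.X 0 ^ 2 + (MvPowerSeries.X 1 + bc.1) ^ 3)

/-- one step of the Newton-type iteration -/
def iter (h : RR) : ℕ → RR × RR :=
  fun n => Nat.rec ((0 : RR), (0 : RR))
    (fun _ bc => (bc.1 + (Y * Bf (resid h bc) + Af (resid h bc)),
                  bc.2 + Bf (resid h bc))) n

lemma iter_zero (h : RR) : iter h 0 = (0, 0) := rfl

lemma iter_succ (h : RR) (n : ℕ) :
    iter h (n + 1) = ((iter h n).1 + (Y * Bf (resid h (iter h n)) + Af (resid h (iter h n))),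
        (iter h n).2 + Bf (resid h (iter h n))) := rfl

lemma step_identity (h2 : (2 : RR) = 0) (h b c ρ : RR)
    (hρ : ρ = f0 + h - (1 + c) * (MvPowerSeries.X 0 ^ 2 + (MvPowerSeries.X 1 + b) ^ 3))
    {γ β : RR} (hsplit : ρ = γ * f0 + β * Y ^ 2) :
    f0 + h - (1 + (c + γ)) * (MvPowerSeries.X 0 ^ 2 + (MvPowerSeries.X 1 + (b + β)) ^ 3) =
      γ * (Y ^ 3 - (Y + b) ^ 3) - (c + γ) * Y ^ 2 * β
        - (1 + (c + γ)) * (b ^ 2 * β + (Y + b) * β ^ 2 + β ^ 3) := by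
  rw [hρ, f0] at hsplit
  rw [f0]
  linear_combination hsplit - (1 + c + γ) *
    ((MvPowerSeries.X 1 ^ 2 + 3 * MvPowerSeries.X 1 * b + b ^ 2) * β
      + (MvPowerSeries.X 1 + b) * β ^ 2) * h2

lemma cube_diff_mem {b : RR} (hb : b ∈ J K 3) :
    (Y ^ 3 - (Y + b) ^ 3 : RR) ∈ J K 5 := by
  have key : (Y ^ 3 - (Y + b) ^ 3 : RR) =
      -(b * (3 * Y ^ 2 + 3 * Y * b + b ^ 2)) := by ring
  rw [key]
  apply neg_mem
  have hin : (3 * Y ^ 2 + 3 * Y * b + b ^ 2 : RR) ∈ J K 2 := by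
    refine add_mem (add_mem ?_ ?_) ?_
    · exact Ideal.mul_mem_left _ _ (X_pow_mem_J 1 2)
    · rw [mul_assoc]
      exact Ideal.mul_mem_left _ _ (J_le (by omega) (mul_mem_J (X_mem_J 1) hb))
    · exact J_le (by omega) (pow_mem_J hb 2)
  exact mul_mem_J hb hin

lemma invariant (h2 : (2 : RR) = 0) {h : RR} (hh : h ∈ J K 5) :
    ∀ n, (iter h n).1 ∈ J K 3 ∧ (iter h n).2 ∈ J K 3 ∧
      resid h (iter h n) ∈ J K (2 * n + 5) := by
  intro n
  induction n with
  | zero =>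
    refine ⟨by simp [iter_zero], by simp [iter_zero], ?_⟩
    have : resid h (iter h 0) = h := by
      rw [iter_zero, resid, f0]
      ring
    rw [this]
    simpa using hh
  | succ m ih =>
    obtain ⟨hb, hc, hρ⟩ := ih
    set ρ := resid h (iter h m) with hρdef
    set γ := Bf ρ with hγ
    set β := Y * Bf ρ + Af ρ with hβ
    have hγm : γ ∈ J K (2 * m + 3) := Bf_mem (by
      have : 2 * m + 3 + 2 = 2 * m + 5 := by omega
      rw [this]; exact hρ)
    have hβm : β ∈ J K (2 * m + 3) := by
      refine add_mem ?_ (Af_mem (by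
        have : 2 * m + 3 + 2 = 2 * m + 5 := by omega
        rw [this]; exact hρ))
      exact J_le (by omega) (mul_mem_J (X_mem_J 1) hγm)
    have hρ5 : ρ ∈ J K 5 := J_le (by omega) hρ
    have hsplit : ρ = γ * f0 + β * Y ^ 2 := split_f_eq h2 hρ5
    have hid := step_identity h2 h (iter h m).1 (iter h m).2 ρ (by rw [hρdef, resid]) hsplit
    constructor
    · rw [iter_succ]
      exact add_mem hb (J_le (by omega) hβm)
    constructor
    · rw [iter_succ]
      exact add_mem hc (J_le (by omega) hγm)
    · have hres : resid h (iter h (m+1)) =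
          γ * (Y ^ 3 - ((Y : RR) + (iter h m).1) ^ 3) - ((iter h m).2 + γ) * Y ^ 2 * β
            - (1 + ((iter h m).2 + γ)) *
              ((iter h m).1 ^ 2 * β + ((Y : RR) + (iter h m).1) * β ^ 2 + β ^ 3) := by
        rw [iter_succ, resid]
        exact hid
      rw [hres]
      have h357 : 2 * (m + 1) + 5 = 2 * m + 7 := by omega
      rw [h357]
      refine sub_mem (sub_mem ?_ ?_) ?_
      · exact J_le (by omega) (mul_mem_J hγm (cube_diff_mem hb))
      · have : ((iter h m).2 + γ) * Y ^ 2 * β ∈ J K (3 + 2 + (2 * m + 3)) := by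
          exact mul_mem_J (mul_mem_J (add_mem hc (J_le (by omega) hγm)) (X_pow_mem_J 1 2)) hβm
        exact J_le (by omega) this
      · apply Ideal.mul_mem_left
        refine add_mem (add_mem ?_ ?_) ?_
        · exact J_le (by omega) (mul_mem_J (pow_mem_J hb 2) hβm)
        · have hyb : ((Y : RR) + (iter h m).1) ∈ J K 1 :=
            add_mem (X_mem_J 1) (J_le (by omega) hb)
          exact J_le (by omega) (mul_mem_J hyb (pow_mem_J hβm 2))
        · exact J_le (by omega) (pow_mem_J hβm 3)

lemma cauchy_of_increments (s : ℕ → RR) (hinc : ∀ k, s (k + 1) - s k ∈ J K (k + 1)) :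
    ∀ n m, n ≤ m → s m - s n ∈ J K n := by
  intro n m hnm
  induction m with
  | zero =>
    have : n = 0 := by omega
    subst this
    simpa using (J K 0).zero_mem
  | succ k ih =>
    rcases Nat.lt_or_ge n (k + 1) with hlt | hge
    · have h1 := ih (by omega)
      have h2 : s (k + 1) - s n = (s (k + 1) - s k) + (s k - s n) := by ring
      rw [h2]
      exact add_mem (J_le (by omega) (hinc k)) h1
    · have : n = k + 1 := by omega
      subst this
      simpa using (J K (k + 1)).zero_mem

/-- main solving lemma: every `m⁵`-perturbation of `f₀` is a unit multiple of
`x² + (y + b)³` -/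
lemma solve (h2 : (2 : RR) = 0) {h : RR} (hh : h ∈ J K 5) :
    ∃ b c : RR, b ∈ J K 2 ∧ c ∈ J K 1 ∧
      f0 + h = (1 + c) * (MvPowerSeries.X 0 ^ 2 + (MvPowerSeries.X 1 + b) ^ 3) := by
  have hinv := invariant h2 hh
  set s1 : ℕ → RR := fun n => (iter h n).1 with hs1
  set s2 : ℕ → RR := fun n => (iter h n).2 with hs2
  have hinc1 : ∀ k, s1 (k + 1) - s1 k ∈ J K (k + 1) := by
    intro k
    have : s1 (k + 1) - s1 k = Y * Bf (resid h (iter h k)) + Af (resid h (iter h k)) := by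
      simp only [hs1, iter_succ]
      ring
    rw [this]
    have hρ := (hinv k).2.2
    have hB : Bf (resid h (iter h k)) ∈ J K (2 * k + 3) := Bf_mem (by
      have : 2 * k + 3 + 2 = 2 * k + 5 := by omega
      rw [this]; exact hρ)
    have hA : Af (resid h (iter h k)) ∈ J K (2 * k + 3) := Af_mem (by
      have : 2 * k + 3 + 2 = 2 * k + 5 := by omega
      rw [this]; exact hρ)
    refine add_mem ?_ (J_le (by omega) hA)
    exact J_le (by omega) (mul_mem_J (X_mem_J 1) hB)
  have hinc2 : ∀ k, s2 (k + 1) - s2 k ∈ J K (k + 1) := by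
    intro k
    have : s2 (k + 1) - s2 k = Bf (resid h (iter h k)) := by
      simp only [hs2, iter_succ]
      ring
    rw [this]
    have hρ := (hinv k).2.2
    have hB : Bf (resid h (iter h k)) ∈ J K (2 * k + 3) := Bf_mem (by
      have h5 : 2 * k + 3 + 2 = 2 * k + 5 := by omega
      rw [h5]; exact hρ)
    exact J_le (by omega) hB
  obtain ⟨b, hblim, hbJ⟩ := exists_limit s1 (cauchy_of_increments s1 hinc1)
  obtain ⟨c, hclim, hcJ⟩ := exists_limit s2 (cauchy_of_increments s2 hinc2)
  have hb3 : b ∈ J K 3 := hbJ 3 fun n => (hinv n).1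
  have hc3 : c ∈ J K 3 := hcJ 3 fun n => (hinv n).2.1
  refine ⟨b, c, J_le (by omega) hb3, J_le (by omega) hc3, ?_⟩
  have hfinal : f0 + h - (1 + c) * (MvPowerSeries.X 0 ^ 2 + (MvPowerSeries.X 1 + b) ^ 3) = 0 := by
    apply eq_zero_of_forall_mem_J
    intro n
    set W : RR := MvPowerSeries.X 0 ^ 2 + (MvPowerSeries.X 1 + b) ^ 3 with hW
    set Q : RR := ((Y : RR) + s1 n) ^ 2 + ((Y : RR) + s1 n) * ((Y : RR) + b) + ((Y : RR) + b) ^ 2 with hQ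
    have hdiff : f0 + h - (1 + c) * W - resid h (iter h n) =
        -((1 + s2 n) * ((b - s1 n) * Q)) - (c - s2 n) * W := by
      rw [resid, hW, hQ]
      have e1 : (iter h n).1 = s1 n := rfl
      have e2 : (iter h n).2 = s2 n := rfl
      rw [e1, e2]
      ring
    have hmem : f0 + h - (1 + c) * W ∈ J K n := by
      have hpart : f0 + h - (1 + c) * W =
          (f0 + h - (1 + c) * W - resid h (iter h n)) + resid h (iter h n) := by ring
      rw [hpart, hdiff]
      refine add_mem (sub_mem (neg_mem ?_) ?_) (J_le (by omega) (hinv n).2.2)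
      · exact Ideal.mul_mem_left _ _ (Ideal.mul_mem_right _ _ (hblim n))
      · exact Ideal.mul_mem_right _ _ (hclim n)
    exact hmem
  exact sub_eq_zero.mp hfinal

end Solve

/-! ### Derivatives of `f₀` and decomposition of the maximal ideal -/

section Part2

variable {K : Type*} [Field K]

local notation "RR" => MvPowerSeries (Fin 2) K

lemma finsupp_eq_iff (u v : Fin 2 →₀ ℕ) : u = v ↔ u 0 = v 0 ∧ u 1 = v 1 := by
  constructor
  · rintro rfl; exact ⟨rfl, rfl⟩
  · rintro ⟨h0, h1⟩
    ext a
    revert a; rw [Fin.forall_fin_two]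
    exact ⟨h0, h1⟩

lemma coeff_f0 (m : Fin 2 →₀ ℕ) :
    MvPowerSeries.coeff m (MvPowerSeries.X 0 ^ 2 + MvPowerSeries.X 1 ^ 3 : RR) =
      (if m = Finsupp.single 0 2 then 1 else 0) + (if m = Finsupp.single 1 3 then 1 else 0) := by
  classical
  rw [map_add, MvPowerSeries.coeff_X_pow, MvPowerSeries.coeff_X_pow]

lemma coeff_pderiv (ν : Fin 2) (f : RR) (e : Fin 2 →₀ ℕ) :
    MvPowerSeries.coeff e (pderiv ν f) =
      ((e ν + 1 : ℕ) : K) * MvPowerSeries.coeff (e + Finsupp.single ν 1) f := rfl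

lemma pderiv0_f0 (h2K : (2 : K) = 0) :
    pderiv 0 (MvPowerSeries.X 0 ^ 2 + MvPowerSeries.X 1 ^ 3 : RR) = 0 := by
  apply MvPowerSeries.ext
  intro e
  rw [coeff_pderiv, coeff_f0, show MvPowerSeries.coeff e (0 : RR) = 0 from map_zero _]
  have hno : ¬ (e + Finsupp.single 0 1 = Finsupp.single 1 3) := by
    rw [finsupp_eq_iff]
    rintro ⟨h0', h1'⟩
    simp [Finsupp.add_apply, Finsupp.single_apply] at h0' h1'
  rw [if_neg hno, add_zero]
  by_cases he : e = Finsupp.single 0 1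
  · subst he
    have hpos : (Finsupp.single (0:Fin 2) 1 + Finsupp.single 0 1 = Finsupp.single 0 2) := by
      rw [finsupp_eq_iff]
      constructor <;> simp [Finsupp.add_apply, Finsupp.single_apply]
    rw [if_pos hpos, mul_one]
    have he0 : (Finsupp.single (0 : Fin 2) 1) 0 = 1 := by simp
    rw [he0]
    have hc2 : ((1 + 1 : ℕ) : K) = 2 := by norm_cast
    rw [hc2, h2K]
  · have hneg : ¬ (e + Finsupp.single 0 1 = Finsupp.single 0 2) := by
      intro hc
      apply he
      rw [finsupp_eq_iff] at hc ⊢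
      simp only [Finsupp.add_apply, Finsupp.single_apply] at hc ⊢
      simp at hc ⊢
      omega
    rw [if_neg hneg, mul_zero]

lemma pderiv1_f0 (h2K : (2 : K) = 0) :
    pderiv 1 (MvPowerSeries.X 0 ^ 2 + MvPowerSeries.X 1 ^ 3 : RR) =
      MvPowerSeries.X 1 ^ 2 := by
  classical
  apply MvPowerSeries.ext
  intro e
  rw [coeff_pderiv, coeff_f0, MvPowerSeries.coeff_X_pow]
  have hno : ¬ (e + Finsupp.single 1 1 = Finsupp.single 0 2) := by
    rw [finsupp_eq_iff]
    rintro ⟨h0', h1'⟩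
    simp [Finsupp.add_apply, Finsupp.single_apply] at h0' h1'
  rw [if_neg hno, zero_add]
  by_cases he : e = Finsupp.single 1 2
  · subst he
    have hpos : (Finsupp.single (1:Fin 2) 2 + Finsupp.single 1 1 = Finsupp.single 1 3) := by
      rw [finsupp_eq_iff]
      constructor <;> simp [Finsupp.add_apply, Finsupp.single_apply]
    rw [if_pos hpos, if_pos rfl, mul_one]
    have he1 : (Finsupp.single (1 : Fin 2) 2) 1 = 2 := by simp
    rw [he1]
    have hc3 : ((2 + 1 : ℕ) : K) = 3 := by norm_cast
    rw [hc3, show (3 : K) = 2 + 1 by norm_num, h2K, zero_add]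
  · have hneg : ¬ (e + Finsupp.single 1 1 = Finsupp.single 1 3) := by
      intro hc
      apply he
      rw [finsupp_eq_iff] at hc ⊢
      simp only [Finsupp.add_apply, Finsupp.single_apply] at hc ⊢
      simp at hc ⊢
      omega
    rw [if_neg hneg, mul_zero, if_neg he]

/-- divide off `x` -/
def Ax (a : RR) : RR := fun d => MvPowerSeries.coeff (d + Finsupp.single 0 1) a

/-- divide the `x`-free part by `y` -/
def Bx (a : RR) : RR := fun d =>
  if d 0 = 0 then MvPowerSeries.coeff (d + Finsupp.single 1 1) a else 0

lemma coeff_Ax (a : RR) (d : Fin 2 →₀ ℕ) :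
    MvPowerSeries.coeff d (Ax a) = MvPowerSeries.coeff (d + Finsupp.single 0 1) a := rfl

lemma coeff_Bx (a : RR) (d : Fin 2 →₀ ℕ) :
    MvPowerSeries.coeff d (Bx a) =
      if d 0 = 0 then MvPowerSeries.coeff (d + Finsupp.single 1 1) a else 0 := rfl

lemma mdecomp {a : RR} (ha : MvPowerSeries.constantCoeff a = 0) :
    a = MvPowerSeries.X 0 * Ax a + MvPowerSeries.X 1 * Bx a := by
  ext d
  have c0 : MvPowerSeries.coeff d (MvPowerSeries.X 0 * Ax a) =
      if Finsupp.single 0 1 ≤ d then MvPowerSeries.coeff (d - Finsupp.single 0 1) (Ax a)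
      else 0 := by
    have := coeff_X_pow_mul (K := K) 0 1 (Ax a) d
    rwa [pow_one] at this
  have c1 : MvPowerSeries.coeff d (MvPowerSeries.X 1 * Bx a) =
      if Finsupp.single 1 1 ≤ d then MvPowerSeries.coeff (d - Finsupp.single 1 1) (Bx a)
      else 0 := by
    have := coeff_X_pow_mul (K := K) 1 1 (Bx a) d
    rwa [pow_one] at this
  rw [map_add, c0, c1]
  have hs0 : Finsupp.single (0 : Fin 2) 1 ≤ d ↔ 1 ≤ d 0 := Finsupp.single_le_iff
  have hs1 : Finsupp.single (1 : Fin 2) 1 ≤ d ↔ 1 ≤ d 1 := Finsupp.single_le_iff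
  by_cases h0 : 1 ≤ d 0
  · rw [if_pos (hs0.mpr h0)]
    have hAx : MvPowerSeries.coeff (d - Finsupp.single 0 1) (Ax a) =
        MvPowerSeries.coeff d a := by
      rw [coeff_Ax, tsub_add_cancel_of_le (hs0.mpr h0)]
    rw [hAx]
    have hBx0 : (if Finsupp.single (1 : Fin 2) 1 ≤ d
        then MvPowerSeries.coeff (d - Finsupp.single 1 1) (Bx a) else 0) = 0 := by
      split
      · rw [coeff_Bx, if_neg]
        rw [Finsupp.tsub_apply]
        simp [Finsupp.single_apply]
        omega
      · rfl
    rw [hBx0, add_zero]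
  · rw [if_neg (fun hc => h0 (hs0.mp hc)), zero_add]
    by_cases h1 : 1 ≤ d 1
    · rw [if_pos (hs1.mpr h1), coeff_Bx,
        if_pos (by rw [Finsupp.tsub_apply]; simp [Finsupp.single_apply]; omega),
        tsub_add_cancel_of_le (hs1.mpr h1)]
    · rw [if_neg (fun hc => h1 (hs1.mp hc))]
      have hd0 : d = 0 := by
        ext a'
        revert a'; rw [Fin.forall_fin_two]
        constructor <;> simp <;> omega
      subst hd0
      simpa [MvPowerSeries.coeff_zero_eq_constantCoeff] using ha

lemma X_mem_maximalIdeal (i : Fin 2) :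
    (MvPowerSeries.X i : RR) ∈ maximalIdeal RR := by
  rw [mem_maximalIdeal, mem_nonunits_iff, MvPowerSeries.isUnit_iff_constantCoeff,
    MvPowerSeries.constantCoeff_X]
  simp

lemma constantCoeff_eq_zero_of_mem_maximalIdeal {a : RR} (ha : a ∈ maximalIdeal RR) :
    MvPowerSeries.constantCoeff a = 0 := by
  rw [mem_maximalIdeal, mem_nonunits_iff, MvPowerSeries.isUnit_iff_constantCoeff,
    isUnit_iff_ne_zero, not_not] at ha
  exact ha

end Part2

end CD

theorem example_char_two_contact_determinacy
    {K : Type*} [Field K] (hchar : ringChar K = 2) :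
    (∀ g : MvPowerSeries (Fin 2) K,
      g - (MvPowerSeries.X 0 ^ 2 + MvPowerSeries.X 1 ^ 3) ∈
        (maximalIdeal (MvPowerSeries (Fin 2) K)) ^ 5 →
      ∃ (u : (MvPowerSeries (Fin 2) K)ˣ)
        (φ : MvPowerSeries (Fin 2) K ≃ₐ[K] MvPowerSeries (Fin 2) K),
        g = (u : MvPowerSeries (Fin 2) K) *
          φ (MvPowerSeries.X 0 ^ 2 + MvPowerSeries.X 1 ^ 3)) ∧
    Ideal.span {(MvPowerSeries.X 0 ^ 2 + MvPowerSeries.X 1 ^ 3 : MvPowerSeries (Fin 2) K)} +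
        (maximalIdeal (MvPowerSeries (Fin 2) K)) *
          Ideal.span {pderiv 0 (MvPowerSeries.X 0 ^ 2 + MvPowerSeries.X 1 ^ 3 :
              MvPowerSeries (Fin 2) K),
            pderiv 1 (MvPowerSeries.X 0 ^ 2 + MvPowerSeries.X 1 ^ 3 :
              MvPowerSeries (Fin 2) K)} =
      Ideal.span {(MvPowerSeries.X 0 ^ 2 : MvPowerSeries (Fin 2) K),
        MvPowerSeries.X 0 * MvPowerSeries.X 1 ^ 2, MvPowerSeries.X 1 ^ 3} := by
  haveI hK2 : CharP K 2 := hchar ▸ ringChar.charP K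
  have h2K : (2 : K) = 0 := by exact_mod_cast CharP.cast_eq_zero K 2
  have h2R : (2 : MvPowerSeries (Fin 2) K) = 0 := by
    have h1 : (2 : MvPowerSeries (Fin 2) K) = MvPowerSeries.C (σ := Fin 2) (R := K) (2 : K) :=
      (map_ofNat (MvPowerSeries.C (σ := Fin 2) (R := K)) 2).symm
    rw [h1, h2K, map_zero]
  constructor
  · -- Part 1 : contact 4-determinacy
    intro g hg
    have hh : g - (MvPowerSeries.X 0 ^ 2 + MvPowerSeries.X 1 ^ 3) ∈ CD.J K 5 :=
      CD.maximalIdeal_pow_le_J 5 hg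
    obtain ⟨b, c, hb, hc, heq⟩ := CD.solve h2R hh
    have hcc : MvPowerSeries.constantCoeff (1 + c) = 1 := by
      rw [map_add, map_one]
      have h0 : MvPowerSeries.coeff 0 c = 0 := hc 0 (by simp [CD.deg])
      rw [MvPowerSeries.coeff_zero_eq_constantCoeff] at h0
      rw [h0, add_zero]
    have hu : IsUnit (1 + c) := by
      rw [MvPowerSeries.isUnit_iff_constantCoeff, hcc]
      exact isUnit_one
    refine ⟨hu.unit, CD.SE b hb, ?_⟩
    rw [CD.SE_f0 b hb, IsUnit.unit_spec]
    have hf0 : (CD.f0 : MvPowerSeries (Fin 2) K) =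
        MvPowerSeries.X 0 ^ 2 + MvPowerSeries.X 1 ^ 3 := rfl
    rw [hf0] at heq
    linear_combination heq
  · -- Part 2 : the contact tangent image
    rw [CD.pderiv0_f0 h2K, CD.pderiv1_f0 h2K]
    have hzsp : Ideal.span ({0, MvPowerSeries.X 1 ^ 2} : Set (MvPowerSeries (Fin 2) K)) =
        Ideal.span {MvPowerSeries.X 1 ^ 2} := Submodule.span_insert_zero
    rw [hzsp]
    apply le_antisymm
    · rw [Submodule.add_eq_sup]
      apply sup_le
      · rw [Ideal.span_le]
        rintro x hx
        simp only [Set.mem_singleton_iff] at hx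
        subst hx
        exact add_mem
          (Ideal.subset_span (by simp))
          (Ideal.subset_span (by simp))
      · refine Ideal.mul_le.2 fun a ha p hp => ?_
        rw [Ideal.mem_span_singleton'] at hp
        obtain ⟨r, hr⟩ := hp
        have ha0 := CD.constantCoeff_eq_zero_of_mem_maximalIdeal ha
        have hdec := CD.mdecomp ha0
        have key : a * p = (CD.Ax a * r) * (MvPowerSeries.X 0 * MvPowerSeries.X 1 ^ 2)
            + (CD.Bx a * r) * (MvPowerSeries.X 1 ^ 3) := by
          conv_lhs => rw [← hr, hdec]
          ring
        rw [key]
        exact add_mem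
          (Ideal.mul_mem_left _ _ (Ideal.subset_span (by simp)))
          (Ideal.mul_mem_left _ _ (Ideal.subset_span (by simp)))
    · rw [Ideal.span_le, Submodule.add_eq_sup]
      rintro x hx
      simp only [Set.mem_insert_iff, Set.mem_singleton_iff] at hx
      rcases hx with rfl | rfl | rfl
      · have key : (MvPowerSeries.X 0 ^ 2 : MvPowerSeries (Fin 2) K) =
            (MvPowerSeries.X 0 ^ 2 + MvPowerSeries.X 1 ^ 3)
              - MvPowerSeries.X 1 * MvPowerSeries.X 1 ^ 2 := by ring
        have h' : (MvPowerSeries.X 0 ^ 2 + MvPowerSeries.X 1 ^ 3)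
              - MvPowerSeries.X 1 * MvPowerSeries.X 1 ^ 2 ∈
            Ideal.span {(MvPowerSeries.X 0 ^ 2 + MvPowerSeries.X 1 ^ 3 :
                MvPowerSeries (Fin 2) K)} ⊔
              maximalIdeal (MvPowerSeries (Fin 2) K) *
                Ideal.span {(MvPowerSeries.X 1 ^ 2 : MvPowerSeries (Fin 2) K)} :=
          sub_mem (Submodule.mem_sup_left (Ideal.subset_span (by simp)))
            (Submodule.mem_sup_right
              (Ideal.mul_mem_mul (CD.X_mem_maximalIdeal 1) (Ideal.subset_span (by simp))))
        rwa [← key] at h'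
      · refine Submodule.mem_sup_right ?_
        exact Ideal.mul_mem_mul (CD.X_mem_maximalIdeal 0) (Ideal.subset_span (by simp))
      · have key : (MvPowerSeries.X 1 ^ 3 : MvPowerSeries (Fin 2) K) =
            MvPowerSeries.X 1 * MvPowerSeries.X 1 ^ 2 := by ring
        have h' : MvPowerSeries.X 1 * MvPowerSeries.X 1 ^ 2 ∈
            Ideal.span {(MvPowerSeries.X 0 ^ 2 + MvPowerSeries.X 1 ^ 3 :
                MvPowerSeries (Fin 2) K)} ⊔
              maximalIdeal (MvPowerSeries (Fin 2) K) *
                Ideal.span {(MvPowerSeries.X 1 ^ 2 : MvPowerSeries (Fin 2) K)} :=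
          Submodule.mem_sup_right
            (Ideal.mul_mem_mul (CD.X_mem_maximalIdeal 1) (Ideal.subset_span (by simp)))
        rwa [← key] at h'
end
end
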